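/- arXiv:2403.03197 — 3 statements merged into one kernel-verified Lean document; each statement's English description precedes it below -/
import Mathlib

section
/- For every integer n ≥ 1 and every integer i with 1 ≤ i ≤ n, there is no (x,y) ∈ [0,1)² such that simultaneously Λ_n(x,y) = (0,0,i+1) and Λ_n(y,x) = (1,1,2). (This shows the antigreen tiles do not occur as TILE_n(x,y).) -/
open scoped BigOperators

namespace MetallicMean

/-- A 3-dimensional integer vector. -/
abbrev Vec3 := ℤ × ℤ × ℤ

/-- A Wang tile is a quadruple (right, top, left, bottom) of labels. -/
abbrev Tile := Vec3 × Vec3 × Vec3 × Vec3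

def right (τ : Tile) : Vec3 := τ.1
def top (τ : Tile) : Vec3 := τ.2.1
def left (τ : Tile) : Vec3 := τ.2.2.1
def bottom (τ : Tile) : Vec3 := τ.2.2.2

/-- Reflection of a tile by the positive diagonal: (r,t,ℓ,b) ↦ (t,r,b,ℓ). -/
def reflect (τ : Tile) : Tile := (top τ, right τ, bottom τ, left τ)

/-- The set V_n of admissible labels. -/
def Vset (n : ℤ) : Set Vec3 :=
  {v | 0 ≤ v.1 ∧ v.1 ≤ v.2.1 ∧ v.2.1 ≤ v.2.2 ∧ v.2.2 ≤ n + 1 ∧ v.2.1 ≤ 1}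

/-- The function θ_n. -/
def theta (n : ℤ) (u v : Vec3) : Vec3 :=
  (u.1,
   if u.1 = 0 then v.2.2 - n else 1,
   if v.1 = 0 then v.2.1 + u.1 else u.2.2 + 1)

/-- The set 𝒞_n of instances of the θ_n-chip. -/
def Cset (n : ℤ) : Set Tile :=
  {τ | ∃ u v : Vec3, u ∈ Vset n ∧ v ∈ Vset n ∧
      theta n u v ∈ Vset n ∧ theta n v u ∈ Vset n ∧
      τ = (theta n u v, theta n v u, u, v)}

/-- The n-th metallic mean β, the positive root of x² - nx - 1. -/
noncomputable def beta (n : ℤ) : ℝ := ((n : ℝ) + Real.sqrt ((n : ℝ) ^ 2 + 4)) / 2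

/-- The conjugate root β* = n - β = -β⁻¹. -/
noncomputable def betaStar (n : ℤ) : ℝ := (n : ℝ) - beta n

/-- The coding map Λ_n. -/
noncomputable def Lam (n : ℤ) (x y : ℝ) : Vec3 :=
  (⌊y + betaStar n + 1⌋,
   ⌊(beta n)⁻¹ * x + y + betaStar n + 1⌋,
   ⌊beta n * x + y + betaStar n + 1⌋)

/-- The Wang tile TILE_n(x, y), written as (right, top, left, bottom). -/
noncomputable def TileAt (n : ℤ) (x y : ℝ) : Tile :=
  (Lam n (Int.fract x) (Int.fract y),
   Lam n (Int.fract y) (Int.fract x),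
   Lam n (Int.fract (x + betaStar n)) (Int.fract y),
   Lam n (Int.fract (y + betaStar n)) (Int.fract x))

/-- The metallic mean Wang tile set 𝒯_n = {TILE_n(x,y) : (x,y) ∈ [0,1]²}. -/
def Tset (n : ℤ) : Set Tile :=
  {τ | ∃ x y : ℝ, x ∈ Set.Icc (0 : ℝ) 1 ∧ y ∈ Set.Icc (0 : ℝ) 1 ∧ τ = TileAt n x y}

/-- A configuration assigns a tile to every position of ℤ². -/
abbrev Config := ℤ × ℤ → Tile

/-- A configuration is valid w.r.t. a set `S` of Wang tiles if all its tiles are in `S`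
and contiguous edges of adjacent tiles match. -/
def IsValid (S : Set Tile) (w : Config) : Prop :=
  (∀ p : ℤ × ℤ, w p ∈ S) ∧
  ∀ p : ℤ × ℤ,
    right (w p) = left (w (p + (1, 0))) ∧
    top (w p) = bottom (w (p + (0, 1)))

/-- The Wang shift Ω_S of all valid configurations over `S`. -/
def OmegaOf (S : Set Tile) : Set Config := {w | IsValid S w}

/-- The shift ℤ²-action on configurations: (σ^k w)(p) = w(p + k). -/
def shift (k : ℤ × ℤ) (w : Config) : Config := fun p => w (p + k)

end MetallicMean

namespace MetallicMean

/-- For every integer 1 ≤ i ≤ n, there is no (x,y) ∈ [0,1)² with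
Λ_n(x,y) = (0,0,i+1) and Λ_n(y,x) = (1,1,2) (the antigreen tiles do not occur). -/
theorem statement13 (n : ℤ) (hn : 1 ≤ n) (i : ℤ) (hi1 : 1 ≤ i) (hi2 : i ≤ n) :
    ¬ ∃ x y : ℝ, x ∈ Set.Ico (0 : ℝ) 1 ∧ y ∈ Set.Ico (0 : ℝ) 1 ∧
      Lam n x y = ((0, 0, i + 1) : Vec3) ∧ Lam n y x = ((1, 1, 2) : Vec3) := by
  rintro ⟨x, y, hx, hy, h1, h2⟩
  set b := beta n with hb
  have hn' : (1 : ℝ) ≤ (n : ℝ) := by exact_mod_cast hn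
  have hs : (n : ℝ) < Real.sqrt ((n : ℝ) ^ 2 + 4) := by
    have h0 : (0 : ℝ) ≤ (n : ℝ) := by linarith
    calc (n : ℝ) = Real.sqrt ((n : ℝ) ^ 2) := by rw [Real.sqrt_sq h0]
      _ < Real.sqrt ((n : ℝ) ^ 2 + 4) := by
          apply Real.sqrt_lt_sqrt (by positivity); linarith
  have hbn : (n : ℝ) < b := by
    simp only [hb, beta]; linarith
  have hb0 : (0 : ℝ) < b := by linarith
  have hbsq : b * (b - n) = 1 := by
    have h4 : Real.sqrt ((n : ℝ) ^ 2 + 4) ^ 2 = (n : ℝ) ^ 2 + 4 :=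
      Real.sq_sqrt (by positivity)
    simp only [hb, beta]; nlinarith [h4]
  have hbinv : b⁻¹ = b - (n : ℝ) := by
    field_simp
    nlinarith [hbsq]
  have hst : betaStar n = (n : ℝ) - b := rfl
  simp only [Lam, Prod.mk.injEq] at h1 h2
  obtain ⟨-, h12, -⟩ := h1
  obtain ⟨-, -, h23⟩ := h2
  have A : b⁻¹ * x + y + betaStar n + 1 < 1 := by
    have := Int.lt_floor_add_one (b⁻¹ * x + y + betaStar n + 1)
    rw [h12] at this; push_cast at this; linarith
  have B : (2 : ℝ) ≤ b * y + x + betaStar n + 1 := by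
    have := Int.floor_le (b * y + x + betaStar n + 1)
    rw [h23] at this; push_cast at this; linarith
  rw [hbinv, hst] at A
  rw [hst] at B
  have A' : (b - (n : ℝ)) * x + y < b - (n : ℝ) := by linarith
  have hC : x + b * y < 1 := by
    nlinarith [mul_lt_mul_of_pos_left A' hb0, hbsq, hx.1]
  linarith [hbn, B, hC]

end MetallicMean
end

section
/- Let n ≥ 1 be an integer and d = (0,−1,1). For every (x,y) ∈ [0,1)², the averages of inner products of d/n with the top labels along the row through the origin of the configuration c_(x,y) converge to y: lim_{k→∞} (1/(2k+1)) · Σ_{i=−k}^{k} ⟨(1/n)d, Λ_n({y}, {x + iβ⁻¹})⟩ = y. -/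
open scoped BigOperators

namespace Equidist
open Filter



lemma fract_add_le (u v : ℝ) (hv : 0 ≤ v) : Int.fract (u + v) ≤ Int.fract u + v := by
  have h : (⌊u⌋ : ℝ) ≤ ⌊u + v⌋ := by
    exact_mod_cast Int.floor_le_floor (by linarith : u ≤ u + v)
  simp only [Int.fract]; linarith

lemma fract_sub_eq (t c : ℝ) : Int.fract (t - c) = Int.fract (Int.fract t - c) := by
  have h := Int.floor_add_fract t
  conv_lhs => rw [show t - c = (⌊t⌋ : ℝ) + (Int.fract t - c) by linarith]
  rw [Int.fract_intCast_add]

lemma fract_add_fract_le (u v : ℝ) : Int.fract (u + v) ≤ Int.fract u + Int.fract v := by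
  have h1 : Int.fract (u + v) = Int.fract (u + Int.fract v) := by
    have h := Int.floor_add_fract v
    conv_lhs => rw [show u + v = (u + Int.fract v) + (⌊v⌋:ℝ) by linarith]
    rw [Int.fract_add_intCast]
  rw [h1]
  exact fract_add_le _ _ (Int.fract_nonneg v)

/-- Density of `ℤ·α + ℤ` for irrational `α`. -/
lemma dense_orbit {α : ℝ} (hα : Irrational α) {u v : ℝ} (huv : u < v) :
    ∃ j m : ℤ, u < (j : ℝ) * α + m ∧ (j : ℝ) * α + m < v := by
  set S : AddSubgroup ℝ :=
    { carrier := {x | ∃ j m : ℤ, x = (j : ℝ) * α + m}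
      zero_mem' := ⟨0, 0, by norm_num⟩
      add_mem' := by
        rintro a b ⟨j1, m1, rfl⟩ ⟨j2, m2, rfl⟩
        exact ⟨j1 + j2, m1 + m2, by push_cast; ring⟩
      neg_mem' := by
        rintro a ⟨j, m, rfl⟩
        exact ⟨-j, -m, by push_cast; ring⟩ } with hS
  have hdense : Dense (S : Set ℝ) := by
    rcases S.dense_or_cyclic with h | ⟨g, hg⟩
    · exact h
    · exfalso
      have h1 : (1 : ℝ) ∈ S := ⟨0, 1, by norm_num⟩
      have hαS : α ∈ S := ⟨1, 0, by norm_num⟩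
      rw [hg] at h1 hαS
      rcases AddSubgroup.mem_closure_singleton.1 h1 with ⟨p, hp⟩
      rcases AddSubgroup.mem_closure_singleton.1 hαS with ⟨q, hq⟩
      have hp0 : p ≠ 0 := by rintro rfl; simp at hp
      have hg0 : g = 1 / (p : ℝ) := by
        field_simp
        rw [mul_comm]
        simpa [zsmul_eq_mul] using hp
      apply hα.ne_rat (q / p)
      rw [Rat.cast_div, Rat.cast_intCast, Rat.cast_intCast]
      rw [← hq, zsmul_eq_mul, hg0]
      field_simp
  rcases hdense.exists_between huv with ⟨x, hxS, hx⟩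
  rcases hxS with ⟨j, m, rfl⟩
  exact ⟨j, m, hx.1, hx.2⟩

lemma fract_of_neg {w : ℝ} (h0 : -1 ≤ w) (h1 : w < 0) : Int.fract w = w + 1 := by
  have : Int.fract w = Int.fract (w + 1) := by
    rw [show w + 1 = w + ((1:ℤ):ℝ) by norm_num, Int.fract_add_intCast]
  rw [this, Int.fract_eq_self.2 ⟨by linarith, by linarith⟩]

open scoped Classical

noncomputable def cnt (θ α a ℓ : ℝ) (k : ℕ) : ℕ :=
  ((Finset.Icc (-(k : ℤ)) (k : ℤ)).filter fun i : ℤ => Int.fract (θ + (i : ℝ) * α - a) < ℓ).card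

lemma sum_pieces_le (θ α a ℓ : ℝ) (M p : ℕ) (hM : 1 ≤ M) (hp : p ≤ M)
    (hpℓ : (p : ℝ) / M ≤ ℓ) (k : ℕ) :
    ∑ r ∈ Finset.range p, cnt θ α (a + r / M) (1 / M) k ≤ cnt θ α a ℓ k := by
  have hM0 : (0:ℝ) < M := by exact_mod_cast hM
  have hM1 : (0:ℝ) < 1 / M := by positivity
  set s := Finset.Icc (-(k : ℤ)) (k : ℤ) with hs
  have key : ∀ r r' : ℕ, r < r' → r' < p → ∀ i : ℤ,
      Int.fract (θ + (i : ℝ) * α - (a + r / M)) < 1 / M →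
      ¬ Int.fract (θ + (i : ℝ) * α - (a + r' / M)) < 1 / M := by
    intro r r' hrr' hr'p i h1
    have hd : (1:ℝ) / M ≤ (r' : ℝ) / M - r / M := by
      rw [div_sub_div_same, div_le_div_iff_of_pos_right hM0]
      have : (r:ℝ) + 1 ≤ r' := by exact_mod_cast hrr'
      linarith
    have hd1 : (r' : ℝ) / M - r / M ≤ 1 - 1 / M := by
      have h1' : (r' : ℝ) ≤ (M:ℝ) - 1 := by
        have : (r' : ℝ) + 1 ≤ M := by exact_mod_cast Nat.lt_of_lt_of_le hr'p hp
        linarith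
      have h2' : (0:ℝ) ≤ r := Nat.cast_nonneg r
      have key2 : (1 - 1/(M:ℝ)) * M = M - 1 := by field_simp
      rw [div_sub_div_same, div_le_iff₀ hM0, key2]
      linarith
    have heq : θ + (i : ℝ) * α - (a + r' / M)
        = (θ + (i : ℝ) * α - (a + r / M)) - ((r' : ℝ)/M - r/M) := by ring
    rw [heq, fract_sub_eq]
    have hu0 := Int.fract_nonneg (θ + (i : ℝ) * α - (a + r / M))
    have hval : Int.fract (Int.fract (θ + (i : ℝ) * α - (a + r / M)) - ((r' : ℝ)/M - r/M))
        = Int.fract (θ + (i : ℝ) * α - (a + r / M)) - ((r' : ℝ)/M - r/M) + 1 :=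
      fract_of_neg (by linarith) (by linarith)
    rw [hval]
    push_neg
    linarith
  have hdisj : ∀ r ∈ Finset.range p, ∀ r' ∈ Finset.range p, r ≠ r' →
      Disjoint (s.filter fun i : ℤ => Int.fract (θ + (i : ℝ) * α - (a + r / M)) < 1 / M)
               (s.filter fun i : ℤ => Int.fract (θ + (i : ℝ) * α - (a + r' / M)) < 1 / M) := by
    intro r hr r' hr' hne
    rw [Finset.disjoint_filter]
    intro i _ h1 h2
    rcases Nat.lt_or_ge r r' with h | h
    · exact key r r' h (Finset.mem_range.1 hr') i h1 h2
    · have hlt : r' < r := by omega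
      exact key r' r hlt (Finset.mem_range.1 hr) i h2 h1
  have hcard : ∑ r ∈ Finset.range p, cnt θ α (a + r / M) (1 / M) k
      = ((Finset.range p).biUnion fun r =>
          s.filter fun i : ℤ => Int.fract (θ + (i : ℝ) * α - (a + r / M)) < 1 / M).card := by
    rw [Finset.card_biUnion hdisj]
    rfl
  rw [hcard]
  apply Finset.card_le_card
  intro i hi
  rcases Finset.mem_biUnion.1 hi with ⟨r, hr, hir⟩
  rcases Finset.mem_filter.1 hir with ⟨his, hifr⟩
  refine Finset.mem_filter.2 ⟨his, ?_⟩
  have hrp : r < p := Finset.mem_range.1 hr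
  have heq : θ + (i : ℝ) * α - a = (θ + (i : ℝ) * α - (a + r / M)) + (r:ℝ)/M := by ring
  have hle := fract_add_le (θ + (i : ℝ) * α - (a + r / M)) ((r:ℝ)/M) (by positivity)
  have hrb : ((r:ℝ)+1)/M ≤ (p:ℝ)/M := by
    gcongr
    exact_mod_cast hrp
  have hsum : (1:ℝ)/M + r/M = ((r:ℝ)+1)/M := by ring
  rw [heq]
  linarith

lemma card_Icc_int (k : ℕ) : (Finset.Icc (-(k : ℤ)) (k : ℤ)).card = 2 * k + 1 := by
  rw [Int.card_Icc]
  omega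

lemma cnt_le (θ α a ℓ : ℝ) (k : ℕ) : cnt θ α a ℓ k ≤ 2 * k + 1 := by
  classical
  rw [← card_Icc_int k]
  exact Finset.card_filter_le _ _

lemma cnt_base_int (θ α a ℓ : ℝ) (m : ℤ) (k : ℕ) :
    cnt θ α (a + m) ℓ k = cnt θ α a ℓ k := by
  classical
  unfold cnt
  congr 1
  apply Finset.filter_congr
  intro i _
  have : θ + (i : ℝ) * α - (a + m) = (θ + (i : ℝ) * α - a) - m := by ring
  simp [this, Int.fract_sub_intCast]

lemma cnt_mono_k (θ α a ℓ : ℝ) (k n : ℕ) :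
    cnt θ α a ℓ (k + n) ≤ cnt θ α a ℓ k + 2 * n := by
  classical
  unfold cnt
  simp only [Nat.cast_add]
  set P : ℤ → Prop := fun i => Int.fract (θ + (i : ℝ) * α - a) < ℓ with hP
  have hsub : Finset.Icc (-((k+n) : ℤ)) ((k+n) : ℤ) ⊆
      Finset.Icc (-(k : ℤ)) (k : ℤ) ∪ (Finset.Icc (-((k+n) : ℤ)) ((k+n) : ℤ) \ Finset.Icc (-(k : ℤ)) (k : ℤ)) := by
    intro i hi
    by_cases h : i ∈ Finset.Icc (-(k : ℤ)) (k : ℤ)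
    · exact Finset.mem_union_left _ h
    · exact Finset.mem_union_right _ (Finset.mem_sdiff.2 ⟨hi, h⟩)
  calc ((Finset.Icc (-((k+n) : ℤ)) ((k+n) : ℤ)).filter P).card
      ≤ ((Finset.Icc (-(k : ℤ)) (k : ℤ) ∪ (Finset.Icc (-((k+n):ℤ)) ((k+n):ℤ) \ Finset.Icc (-(k:ℤ)) (k:ℤ))).filter P).card :=
        Finset.card_le_card (Finset.filter_subset_filter _ hsub)
    _ ≤ ((Finset.Icc (-(k:ℤ)) (k:ℤ)).filter P).card + ((Finset.Icc (-((k+n):ℤ)) ((k+n):ℤ) \ Finset.Icc (-(k:ℤ)) (k:ℤ)).filter P).card := by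
        rw [Finset.filter_union]
        exact Finset.card_union_le _ _
    _ ≤ ((Finset.Icc (-(k:ℤ)) (k:ℤ)).filter P).card + 2 * n := by
        gcongr
        calc ((Finset.Icc (-((k+n):ℤ)) ((k+n):ℤ) \ Finset.Icc (-(k:ℤ)) (k:ℤ)).filter P).card
            ≤ (Finset.Icc (-((k+n):ℤ)) ((k+n):ℤ) \ Finset.Icc (-(k:ℤ)) (k:ℤ)).card := Finset.card_filter_le _ _
          _ = (Finset.Icc (-((k+n):ℤ)) ((k+n):ℤ)).card - (Finset.Icc (-(k:ℤ)) (k:ℤ)).card := by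
              apply Finset.card_sdiff_of_subset
              intro i hi
              simp only [Finset.mem_Icc] at *
              omega
          _ ≤ 2 * n := by rw [Int.card_Icc, Int.card_Icc]; omega

lemma cnt_shift (θ α a ℓ : ℝ) (j : ℤ) (k : ℕ) :
    cnt θ α (a + j * α) ℓ k ≤ cnt θ α a ℓ k + 2 * j.natAbs := by
  classical
  have step1 : cnt θ α (a + j * α) ℓ k ≤ cnt θ α a ℓ (k + j.natAbs) := by
    unfold cnt
    simp only [Nat.cast_add]
    apply Finset.card_le_card_of_injOn (fun i => i - j)
    · intro i hi
      simp only [Finset.mem_coe, Finset.mem_filter, Finset.mem_Icc] at hi ⊢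
      constructor
      · omega
      · have : θ + ((i - j : ℤ) : ℝ) * α - a = θ + (i : ℝ) * α - (a + (j : ℝ) * α) := by
          push_cast; ring
        rw [this]
        exact hi.2
    · intro i _ i' _ h
      have h' : i - j = i' - j := h
      omega
  calc cnt θ α (a + j * α) ℓ k ≤ cnt θ α a ℓ (k + j.natAbs) := step1
    _ ≤ cnt θ α a ℓ k + 2 * j.natAbs := cnt_mono_k θ α a ℓ k j.natAbs


/-- Covering bound: there is a constant `J` with `2k+1 ≤ (M+1)·cnt(a,1/M,k) + J`. -/
lemma cover_bound (θ α a : ℝ) (hα : Irrational α) (M : ℕ) (hM : 1 ≤ M) :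
    ∃ J : ℕ, ∀ k : ℕ, 2 * k + 1 ≤ (M + 1) * cnt θ α a (1 / M) k + J := by
  have hM0 : (0:ℝ) < M := by exact_mod_cast hM
  have hM10 : (0:ℝ) < M + 1 := by positivity
  have hδ : (0:ℝ) < 1 / M - 1 / (M + 1) := by
    rw [sub_pos, div_lt_div_iff₀ hM10 hM0]
    linarith
  -- for each r ≤ M choose j m with (r:ℝ)/(M+1) - a - δ < jα+m < (r:ℝ)/(M+1) - a
  have hch : ∀ r : ℕ, ∃ j m : ℤ,
      (r:ℝ)/(M+1) - a - (1/M - 1/(M+1)) < (j : ℝ) * α + m ∧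
      (j : ℝ) * α + m < (r:ℝ)/(M+1) - a := by
    intro r
    exact dense_orbit hα (by linarith)
  choose j m hjm1 hjm2 using hch
  refine ⟨∑ r ∈ Finset.range (M+1), 2 * (j r).natAbs, fun k => ?_⟩
  -- cover step
  have hcov : Finset.Icc (-(k : ℤ)) (k : ℤ) ⊆
      (Finset.range (M+1)).biUnion fun r =>
        (Finset.Icc (-(k : ℤ)) (k : ℤ)).filter fun i : ℤ =>
          Int.fract (θ + (i : ℝ) * α - (a + ((j r : ℝ) * α + m r))) < 1 / M := by
    intro i hi
    set t := θ + (i : ℝ) * α with ht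
    have hu0 := Int.fract_nonneg t
    have hu1 := Int.fract_lt_one t
    set r : ℕ := ⌊Int.fract t * (M+1)⌋₊ with hr
    have hrM : r < M + 1 := by
      have : Int.fract t * (M+1) < M + 1 := by nlinarith
      have h2 : (r : ℝ) ≤ Int.fract t * (M+1) := Nat.floor_le (by positivity)
      by_contra hc
      push_neg at hc
      have : (M+1 : ℝ) ≤ (r:ℝ) := by exact_mod_cast hc
      linarith
    refine Finset.mem_biUnion.2 ⟨r, Finset.mem_range.2 hrM, Finset.mem_filter.2 ⟨hi, ?_⟩⟩
    -- first: fract (t - r/(M+1)) < 1/(M+1)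
    have hfl : (r : ℝ) ≤ Int.fract t * (M+1) := Nat.floor_le (by positivity)
    have hfu : Int.fract t * (M+1) < r + 1 := Nat.lt_floor_add_one _
    have hb1 : (r:ℝ)/(M+1) ≤ Int.fract t := by
      rw [div_le_iff₀ hM10]; linarith
    have hb2 : Int.fract t < ((r:ℝ)+1)/(M+1) := by
      rw [lt_div_iff₀ hM10]; linarith
    have hstep : Int.fract (t - (r:ℝ)/(M+1)) < 1/(M+1) := by
      rw [fract_sub_eq]
      have h01 : Int.fract t - (r:ℝ)/(M+1) ∈ Set.Ico (0:ℝ) 1 := by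
        constructor
        · linarith
        · have : ((r:ℝ)+1)/(M+1) ≤ 1 := by
            rw [div_le_one hM10]
            have : (r:ℝ) + 1 ≤ M + 1 := by exact_mod_cast hrM
            linarith
          have hd0 : (0:ℝ) ≤ (r:ℝ)/(M+1) := by positivity
          linarith
      rw [Int.fract_eq_self.2 ⟨h01.1, h01.2⟩]
      have : ((r:ℝ)+1)/(M+1) - (r:ℝ)/(M+1) = 1/(M+1) := by ring
      linarith
    -- now arc_subset: fract(r/(M+1) - (a + jα + m)) ≤ 1/M - 1/(M+1)
    have hbase : Int.fract ((r:ℝ)/(M+1) - (a + ((j r : ℝ) * α + m r))) ≤ 1/M - 1/(M+1) := by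
      have h1 := hjm1 r
      have h2 := hjm2 r
      have hin : (r:ℝ)/(M+1) - (a + ((j r : ℝ) * α + m r)) ∈ Set.Ico (0:ℝ) 1 := by
        constructor
        · linarith
        · have : (1:ℝ)/M ≤ 1 := by
            rw [div_le_one hM0]; exact_mod_cast hM
          have : (1:ℝ)/(M+1) > 0 := by positivity
          linarith
      rw [Int.fract_eq_self.2 ⟨hin.1, hin.2⟩]
      linarith
    -- combine
    have hcomb : Int.fract (t - (a + ((j r : ℝ) * α + m r)))
        ≤ Int.fract (t - (r:ℝ)/(M+1)) + Int.fract ((r:ℝ)/(M+1) - (a + ((j r : ℝ) * α + m r))) := by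
      have : t - (a + ((j r : ℝ) * α + m r))
          = (t - (r:ℝ)/(M+1)) + ((r:ℝ)/(M+1) - (a + ((j r : ℝ) * α + m r))) := by ring
      rw [this]
      exact fract_add_fract_le _ _
    calc Int.fract (t - (a + ((j r : ℝ) * α + m r)))
        ≤ Int.fract (t - (r:ℝ)/(M+1)) + Int.fract ((r:ℝ)/(M+1) - (a + ((j r : ℝ) * α + m r))) := hcomb
      _ < 1/(M+1) + (1/M - 1/(M+1)) := by linarith
      _ = 1/M := by ring
  -- count
  have hcount : 2 * k + 1 ≤ ∑ r ∈ Finset.range (M+1),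
      ((Finset.Icc (-(k : ℤ)) (k : ℤ)).filter fun i : ℤ =>
        Int.fract (θ + (i : ℝ) * α - (a + ((j r : ℝ) * α + m r))) < 1 / M).card := by
    calc 2 * k + 1 = (Finset.Icc (-(k : ℤ)) (k : ℤ)).card := (card_Icc_int k).symm
      _ ≤ ((Finset.range (M+1)).biUnion fun r =>
            (Finset.Icc (-(k : ℤ)) (k : ℤ)).filter fun i : ℤ =>
              Int.fract (θ + (i : ℝ) * α - (a + ((j r : ℝ) * α + m r))) < 1 / M).card :=
          Finset.card_le_card hcov
      _ ≤ _ := Finset.card_biUnion_le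
  have hterm : ∀ r : ℕ,
      ((Finset.Icc (-(k : ℤ)) (k : ℤ)).filter fun i : ℤ =>
        Int.fract (θ + (i : ℝ) * α - (a + ((j r : ℝ) * α + m r))) < 1 / M).card
      ≤ cnt θ α a (1/M) k + 2 * (j r).natAbs := by
    intro r
    have e1 : ((Finset.Icc (-(k : ℤ)) (k : ℤ)).filter fun i : ℤ =>
        Int.fract (θ + (i : ℝ) * α - (a + ((j r : ℝ) * α + m r))) < 1 / M).card
        = cnt θ α ((a + (j r) * α) + (m r)) (1/M) k := by
      unfold cnt
      congr 1
      apply Finset.filter_congr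
      intro i _
      constructor <;> intro h <;> [skip; skip] <;>
        · convert h using 3
          push_cast
          ring
    rw [e1, cnt_base_int]
    exact cnt_shift θ α a (1/M) (j r) k
  calc 2 * k + 1 ≤ ∑ r ∈ Finset.range (M+1), ((Finset.Icc (-(k : ℤ)) (k : ℤ)).filter fun i : ℤ =>
        Int.fract (θ + (i : ℝ) * α - (a + ((j r : ℝ) * α + m r))) < 1 / M).card := hcount
    _ ≤ ∑ r ∈ Finset.range (M+1), (cnt θ α a (1/M) k + 2 * (j r).natAbs) :=
        Finset.sum_le_sum fun r _ => hterm r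
    _ = (M+1) * cnt θ α a (1/M) k + ∑ r ∈ Finset.range (M+1), 2 * (j r).natAbs := by
        rw [Finset.sum_add_distrib, Finset.sum_const, Finset.card_range, smul_eq_mul]

/-- Lower bound for the frequency of visits to an arc. -/
lemma lb (θ α a ℓ : ℝ) (hα : Irrational α) (hℓ0 : 0 < ℓ) (hℓ1 : ℓ ≤ 1) {ε : ℝ} (hε : 0 < ε) :
    ∀ᶠ k : ℕ in atTop, (ℓ - ε) * (2 * (k:ℝ) + 1) ≤ (cnt θ α a ℓ k : ℝ) := by
  -- choose M
  obtain ⟨M, hM1, hMℓ, hMε⟩ : ∃ M : ℕ, 1 ≤ M ∧ 1/ℓ ≤ (M:ℝ) ∧ (2*(1+ℓ))/ε ≤ (M:ℝ) + 1 := by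
    obtain ⟨M, hM⟩ := exists_nat_ge (max (1/ℓ) (max ((2*(1+ℓ))/ε) 1))
    refine ⟨M, ?_, ?_, ?_⟩
    · have := le_trans (le_max_right _ _) hM
      have h1 : (1:ℝ) ≤ M := le_trans (le_max_right _ _) (le_trans (le_max_right _ _) hM)
      exact_mod_cast h1
    · exact le_trans (le_max_left _ _) hM
    · have := le_trans (le_max_left _ _) (le_trans (le_max_right _ _) hM)
      linarith
  have hM0 : (0:ℝ) < M := by exact_mod_cast hM1
  set p : ℕ := ⌊ℓ * M⌋₊ with hp
  have hℓM : (1:ℝ) ≤ ℓ * M := by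
    have h := (div_le_iff₀ hℓ0).1 hMℓ
    linarith [mul_comm (M:ℝ) ℓ]
  have hp1 : 1 ≤ p := by
    rw [hp]
    exact (Nat.one_le_floor_iff _).2 hℓM
  have hpM : p ≤ M := by
    have h1 : ℓ * M ≤ M := by nlinarith
    calc p ≤ ⌊(M:ℝ)⌋₊ := Nat.floor_le_floor h1
      _ = M := Nat.floor_natCast M
  have hpℓ : (p:ℝ)/M ≤ ℓ := by
    rw [div_le_iff₀ hM0]
    calc (p:ℝ) ≤ ℓ * M := Nat.floor_le (by positivity)
      _ = ℓ * M := rfl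
  have hplb : (ℓ - ε/2) * ((M:ℝ)+1) ≤ p := by
    have h1 : ℓ * M - 1 < p := by
      have := Nat.lt_floor_add_one (ℓ * M)
      linarith
    have h2 : (ε/2) * ((M:ℝ)+1) ≥ 1 + ℓ := by
      rw [ge_iff_le, ← div_le_iff₀' (by positivity : (0:ℝ) < ε/2)]
      calc (1+ℓ)/(ε/2) = (2*(1+ℓ))/ε := by field_simp
        _ ≤ (M:ℝ)+1 := hMε
    nlinarith
  -- get cover bounds for each piece
  have hcb : ∀ r : ℕ, ∃ J : ℕ, ∀ k : ℕ,
      2 * k + 1 ≤ (M + 1) * cnt θ α (a + r / M) (1 / M) k + J :=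
    fun r => cover_bound θ α (a + r / M) hα M hM1
  choose J hJ using hcb
  set Jtot : ℕ := ∑ r ∈ Finset.range p, J r with hJtot
  -- main inequality: p * (2k+1) ≤ (M+1) * cnt θ α a ℓ k + Jtot
  have hmain : ∀ k : ℕ, p * (2 * k + 1) ≤ (M + 1) * cnt θ α a ℓ k + Jtot := by
    intro k
    calc p * (2 * k + 1) = ∑ r ∈ Finset.range p, (2 * k + 1) := by
          rw [Finset.sum_const, Finset.card_range, smul_eq_mul]
      _ ≤ ∑ r ∈ Finset.range p, ((M + 1) * cnt θ α (a + r / M) (1 / M) k + J r) :=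
          Finset.sum_le_sum fun r _ => hJ r k
      _ = (M+1) * (∑ r ∈ Finset.range p, cnt θ α (a + r / M) (1 / M) k) + Jtot := by
          rw [Finset.sum_add_distrib, Finset.mul_sum]
      _ ≤ (M+1) * cnt θ α a ℓ k + Jtot := by
          gcongr
          exact sum_pieces_le θ α a ℓ M p hM1 hpM hpℓ k
  -- eventually (ε/2)*(M+1)*(2k+1) ≥ Jtot
  have hev : ∀ᶠ k : ℕ in atTop, (Jtot : ℝ) ≤ (ε/2) * ((M:ℝ)+1) * (2*(k:ℝ)+1) := by
    have htend : Tendsto (fun k : ℕ => (ε/2) * ((M:ℝ)+1) * (2*(k:ℝ)+1)) atTop atTop := by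
      have h1 : Tendsto (fun k : ℕ => (k:ℝ)) atTop atTop := tendsto_natCast_atTop_atTop
      have h2 : Tendsto (fun k : ℕ => 2*(k:ℝ)) atTop atTop := h1.const_mul_atTop two_pos
      have h3 : Tendsto (fun k : ℕ => 2*(k:ℝ)+1) atTop atTop :=
        tendsto_atTop_add_const_right atTop 1 h2
      exact h3.const_mul_atTop (by positivity)
    exact htend.eventually_ge_atTop _
  filter_upwards [hev] with k hk
  have hmk := hmain k
  have hmkR : (p:ℝ) * (2*(k:ℝ)+1) ≤ ((M:ℝ)+1) * (cnt θ α a ℓ k : ℝ) + Jtot := by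
    exact_mod_cast hmk
  have hM1R : (0:ℝ) < (M:ℝ)+1 := by positivity
  rw [← sub_nonneg]
  have key : ((M:ℝ)+1) * ((cnt θ α a ℓ k : ℝ) - (ℓ - ε) * (2*(k:ℝ)+1)) ≥ 0 := by
    have e1 : ((M:ℝ)+1) * ((ℓ - ε) * (2*(k:ℝ)+1))
        = (ℓ - ε) * (((M:ℝ)+1)) * (2*(k:ℝ)+1) := by ring
    have e2 : (ℓ - ε/2) * ((M:ℝ)+1) * (2*(k:ℝ)+1) ≤ (p:ℝ) * (2*(k:ℝ)+1) := by
      have h2k : (0:ℝ) ≤ 2*(k:ℝ)+1 := by positivity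
      nlinarith
    nlinarith
  nlinarith

lemma cnt_compl (θ α a ℓ : ℝ) (hℓ0 : 0 < ℓ) (hℓ1 : ℓ < 1) (k : ℕ) :
    cnt θ α a ℓ k + cnt θ α (a + ℓ) (1 - ℓ) k = 2 * k + 1 := by
  have hpt : ∀ i : ℤ, (Int.fract (θ + (i : ℝ) * α - (a + ℓ)) < 1 - ℓ)
      ↔ ¬ (Int.fract (θ + (i : ℝ) * α - a) < ℓ) := by
    intro i
    set t := θ + (i : ℝ) * α - a with ht
    have heq : θ + (i : ℝ) * α - (a + ℓ) = t - ℓ := by rw [ht]; ring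
    rw [heq, fract_sub_eq]
    have hu0 := Int.fract_nonneg t
    have hu1 := Int.fract_lt_one t
    constructor
    · intro h
      push_neg
      by_contra hc
      push_neg at hc
      have hneg : Int.fract t - ℓ < 0 := by linarith
      rw [fract_of_neg (by linarith) hneg] at h
      linarith
    · intro h
      push_neg at h
      rw [Int.fract_eq_self.2 ⟨by linarith, by linarith⟩]
      linarith
  unfold cnt
  rw [← card_Icc_int k]
  have : ((Finset.Icc (-(k : ℤ)) (k : ℤ)).filter fun i : ℤ =>
      Int.fract (θ + (i : ℝ) * α - (a + ℓ)) < 1 - ℓ)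
      = ((Finset.Icc (-(k : ℤ)) (k : ℤ)).filter fun i : ℤ =>
      ¬ (Int.fract (θ + (i : ℝ) * α - a) < ℓ)) := by
    apply Finset.filter_congr
    intro i _
    exact hpt i
  rw [this]
  exact Finset.card_filter_add_card_filter_not _

/-- Equidistribution: frequency of visits to an arc of length `ℓ ∈ [0,1)` tends to `ℓ`. -/
lemma tendsto_cnt (θ α a ℓ : ℝ) (hα : Irrational α) (hℓ0 : 0 ≤ ℓ) (hℓ1 : ℓ < 1) :
    Tendsto (fun k : ℕ => (cnt θ α a ℓ k : ℝ) / (2 * (k:ℝ) + 1)) atTop (nhds ℓ) := by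
  rcases eq_or_lt_of_le hℓ0 with h0 | h0
  · -- ℓ = 0 : cnt is 0
    have hz : ∀ k, cnt θ α a ℓ k = 0 := by
      intro k
      unfold cnt
      rw [Finset.card_eq_zero, Finset.filter_eq_empty_iff]
      intro i _
      rw [← h0]
      push_neg
      exact Int.fract_nonneg _
    simp only [hz, Nat.cast_zero, zero_div]
    rw [← h0]
    exact tendsto_const_nhds
  refine tendsto_order.2 ⟨fun b hb => ?_, fun b hb => ?_⟩
  · -- b < ℓ
    filter_upwards [lb θ α a ℓ hα h0 hℓ1.le (by linarith : (0:ℝ) < (ℓ - b)/2)] with k hk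
    have h2k : (0:ℝ) < 2*(k:ℝ)+1 := by positivity
    rw [lt_div_iff₀ h2k]
    calc b * (2*(k:ℝ)+1) < (ℓ - (ℓ-b)/2) * (2*(k:ℝ)+1) := by nlinarith
      _ ≤ _ := hk
  · -- ℓ < b
    filter_upwards [lb θ α (a + ℓ) (1 - ℓ) hα (by linarith) (by linarith)
      (by linarith : (0:ℝ) < (b - ℓ)/2)] with k hk
    have h2k : (0:ℝ) < 2*(k:ℝ)+1 := by positivity
    rw [div_lt_iff₀ h2k]
    have hc := cnt_compl θ α a ℓ h0 hℓ1 k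
    have hcR : (cnt θ α a ℓ k : ℝ) = (2*(k:ℝ)+1) - (cnt θ α (a+ℓ) (1-ℓ) k : ℝ) := by
      have : (cnt θ α a ℓ k : ℝ) + (cnt θ α (a+ℓ) (1-ℓ) k : ℝ) = 2*(k:ℝ)+1 := by
        exact_mod_cast congrArg (Nat.cast : ℕ → ℝ) hc
      linarith
    rw [hcR]
    have := hk
    nlinarith


end Equidist


namespace MetallicMean

open Equidist Filter
open scoped Classical

lemma sqrt_lemmas (n : ℤ) (hn : 1 ≤ n) :
    Real.sqrt ((n : ℝ) ^ 2 + 4) ^ 2 = (n : ℝ) ^ 2 + 4 ∧ 2 < Real.sqrt ((n : ℝ) ^ 2 + 4) := by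
  have hn' : (1:ℝ) ≤ (n:ℝ) := by exact_mod_cast hn
  have h0 : (0:ℝ) ≤ (n : ℝ) ^ 2 + 4 := by positivity
  have hsq := Real.sq_sqrt h0
  refine ⟨hsq, ?_⟩
  nlinarith [Real.sqrt_nonneg ((n : ℝ) ^ 2 + 4)]

lemma beta_gt_one (n : ℤ) (hn : 1 ≤ n) : 1 < beta n := by
  obtain ⟨_, h2⟩ := sqrt_lemmas n hn
  have hn' : (1:ℝ) ≤ (n:ℝ) := by exact_mod_cast hn
  rw [beta]; linarith

lemma beta_quadratic (n : ℤ) (hn : 1 ≤ n) : beta n * beta n = n * beta n + 1 := by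
  obtain ⟨hsq, _⟩ := sqrt_lemmas n hn
  rw [beta]
  nlinarith

lemma beta_inv_eq (n : ℤ) (hn : 1 ≤ n) : (beta n)⁻¹ = beta n - n := by
  have hq := beta_quadratic n hn
  have hb1 := beta_gt_one n hn
  have hb0 : beta n ≠ 0 := by linarith
  field_simp
  nlinarith

lemma betaStar_eq (n : ℤ) (hn : 1 ≤ n) : betaStar n = -(beta n)⁻¹ := by
  rw [betaStar, beta_inv_eq n hn]; ring

lemma beta_inv_pos (n : ℤ) (hn : 1 ≤ n) : 0 < (beta n)⁻¹ :=
  inv_pos.2 (by linarith [beta_gt_one n hn])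

lemma beta_inv_lt_one (n : ℤ) (hn : 1 ≤ n) : (beta n)⁻¹ < 1 := by
  have := beta_gt_one n hn
  rw [inv_lt_one_iff₀]
  right; exact this

lemma irrational_sqrt (n : ℤ) (hn : 1 ≤ n) : Irrational (Real.sqrt ((n : ℝ) ^ 2 + 4)) := by
  obtain ⟨hsq, h2⟩ := sqrt_lemmas n hn
  apply irrational_nrt_of_notint_nrt 2 (n ^ 2 + 4)
  · rw [hsq]; push_cast; ring
  · rintro ⟨y, hy⟩
    have hy2 : (y : ℝ) ^ 2 = (n:ℝ)^2 + 4 := by rw [← hy]; exact hsq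
    have hyz : y ^ 2 = n ^ 2 + 4 := by exact_mod_cast hy2
    have hypos : 2 < (y:ℝ) := by rw [← hy]; exact h2
    have hyz2 : 2 < y := by exact_mod_cast hypos
    -- n ≥ 1, y ≥ 3, y² = n² + 4
    have h1 : n < y := by nlinarith
    have h2' : y ≤ n + 1 := by nlinarith
    have : y = n + 1 := by omega
    subst this
    have : 2 * n = 3 := by ring_nf at hyz; omega
    omega
  · norm_num

lemma irrational_beta_inv (n : ℤ) (hn : 1 ≤ n) : Irrational ((beta n)⁻¹) := by
  rw [beta_inv_eq n hn]
  have hb : Irrational (beta n) := by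
    rw [beta]
    have h1 : Irrational ((n:ℝ) + Real.sqrt ((n : ℝ) ^ 2 + 4)) :=
      (irrational_sqrt n hn).intCast_add n
    have h2 := h1.div_intCast (m := 2) (by norm_num)
    simpa using h2
  exact hb.sub_intCast n



/-- For every (x,y) ∈ [0,1)², the averages of the inner products of (1/n)d
with the top labels along the row through the origin of c_(x,y) converge to y. -/
theorem statement16 (n : ℤ) (hn : 1 ≤ n) (x y : ℝ)
    (hx : x ∈ Set.Ico (0 : ℝ) 1) (hy : y ∈ Set.Ico (0 : ℝ) 1) :
    Filter.Tendsto
      (fun k : ℕ =>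
        (1 / (2 * (k : ℝ) + 1)) *
          ∑ i ∈ Finset.Icc (-(k : ℤ)) (k : ℤ),
            ((((Lam n (Int.fract y) (Int.fract (x + (i : ℝ) * (beta n)⁻¹))).2.2 -
                (Lam n (Int.fract y) (Int.fract (x + (i : ℝ) * (beta n)⁻¹))).2.1 : ℤ) : ℝ) /
              (n : ℝ)))
      Filter.atTop (nhds y) := by
  set α := (beta n)⁻¹ with hα
  have hα0 := beta_inv_pos n hn
  have hα1 := beta_inv_lt_one n hn
  have hirr := irrational_beta_inv n hn
  have hb1 := beta_gt_one n hn
  have hbn : beta n = (n : ℝ) + α := by rw [hα, beta_inv_eq n hn]; ring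
  have hbs : betaStar n = -α := betaStar_eq n hn
  have hfy : Int.fract y = y := Int.fract_eq_self.2 ⟨hy.1, hy.2⟩
  set m0 : ℤ := ⌊(n : ℝ) * y⌋ with hm0
  set r : ℝ := Int.fract ((n : ℝ) * y) with hr
  have hr0 : 0 ≤ r := Int.fract_nonneg _
  have hr1 : r < 1 := Int.fract_lt_one _
  set θ : ℝ := α * y + x + betaStar n + 1 with hθ
  -- per-term identity
  have hterm : ∀ i : ℤ,
      ((Lam n (Int.fract y) (Int.fract (x + (i : ℝ) * α))).2.2 -
        (Lam n (Int.fract y) (Int.fract (x + (i : ℝ) * α))).2.1 : ℤ)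
      = m0 + (if Int.fract (θ + (i : ℝ) * α - (1 - r)) < r then 1 else 0) := by
    intro i
    set Y : ℝ := Int.fract (x + (i : ℝ) * α) with hY
    have hLam : (Lam n (Int.fract y) Y).2.2 - (Lam n (Int.fract y) Y).2.1
        = ⌊beta n * y + Y + betaStar n + 1⌋ - ⌊α * y + Y + betaStar n + 1⌋ := by
      rw [Lam, hfy]
    rw [hLam]
    set s : ℝ := α * y + Y + betaStar n + 1 with hs
    have hsplit : beta n * y + Y + betaStar n + 1 = (n : ℝ) * y + s := by
      rw [hs, hbn]; ring
    rw [hsplit]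
    have hny : (n : ℝ) * y = (m0 : ℝ) + r := by
      rw [hm0, hr]; linarith [Int.floor_add_fract ((n:ℝ) * y)]
    have hfloor1 : ⌊(n : ℝ) * y + s⌋ = m0 + ⌊r + s⌋ := by
      rw [hny, show (m0 : ℝ) + r + s = r + s + (m0:ℝ) by ring, Int.floor_add_intCast]
      ring
    have hfloor2 : ⌊r + s⌋ = ⌊s⌋ + ⌊r + Int.fract s⌋ := by
      conv_lhs => rw [show r + s = r + Int.fract s + (⌊s⌋ : ℝ) by
        rw [Int.fract]; ring]
      rw [Int.floor_add_intCast]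
      ring
    have hfs0 := Int.fract_nonneg s
    have hfs1 := Int.fract_lt_one s
    have hind : ⌊r + Int.fract s⌋ = if 1 ≤ r + Int.fract s then 1 else 0 := by
      split_ifs with h
      · exact Int.floor_eq_iff.2 ⟨by push_cast; linarith, by push_cast; linarith⟩
      · push_neg at h
        exact Int.floor_eq_iff.2 ⟨by push_cast; linarith, by push_cast; linarith⟩
    -- fract s = fract (θ + iα)
    have hfract_s : Int.fract s = Int.fract (θ + (i : ℝ) * α) := by
      have : s = (θ + (i : ℝ) * α) - (⌊x + (i : ℝ) * α⌋ : ℝ) := by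
        rw [hs, hθ, hY, Int.fract]; ring
      rw [this, Int.fract_sub_intCast]
    -- condition equivalence
    have hcond : (1 ≤ r + Int.fract s) ↔ Int.fract (θ + (i : ℝ) * α - (1 - r)) < r := by
      rw [hfract_s]
      set u := Int.fract (θ + (i : ℝ) * α) with hu
      have hu0 := Int.fract_nonneg (θ + (i : ℝ) * α)
      have hu1 := Int.fract_lt_one (θ + (i : ℝ) * α)
      rw [fract_sub_eq, ← hu]
      constructor
      · intro h
        have h01 : 0 ≤ u - (1 - r) := by linarith
        rw [Int.fract_eq_self.2 ⟨h01, by linarith⟩]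
        linarith
      · intro h
        by_contra hc
        push_neg at hc
        have hneg : u - (1 - r) < 0 := by linarith
        rw [fract_of_neg (by linarith) hneg] at h
        linarith
    rw [hfloor1, hfloor2, hind]
    by_cases h : 1 ≤ r + Int.fract s
    · rw [if_pos h, if_pos (hcond.1 h)]; ring
    · rw [if_neg h, if_neg (fun hc => h (hcond.2 hc))]; ring
  -- rewrite the sum
  have hn0 : (n : ℝ) ≠ 0 := by
    have : (1:ℝ) ≤ (n:ℝ) := by exact_mod_cast hn
    linarith
  have hsum : ∀ k : ℕ,
      (1 / (2 * (k : ℝ) + 1)) *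
          ∑ i ∈ Finset.Icc (-(k : ℤ)) (k : ℤ),
            ((((Lam n (Int.fract y) (Int.fract (x + (i : ℝ) * α))).2.2 -
                (Lam n (Int.fract y) (Int.fract (x + (i : ℝ) * α))).2.1 : ℤ) : ℝ) /
              (n : ℝ))
      = (m0 : ℝ) / n + ((cnt θ α (1 - r) r k : ℝ) / (2 * (k : ℝ) + 1)) / n := by
    intro k
    have h2k : (0:ℝ) < 2 * (k:ℝ) + 1 := by positivity
    have hcard : (Finset.Icc (-(k : ℤ)) (k : ℤ)).card = 2 * k + 1 := by
      rw [Int.card_Icc]; omega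
    have hsum1 : ∑ i ∈ Finset.Icc (-(k : ℤ)) (k : ℤ),
        ((((Lam n (Int.fract y) (Int.fract (x + (i : ℝ) * α))).2.2 -
            (Lam n (Int.fract y) (Int.fract (x + (i : ℝ) * α))).2.1 : ℤ) : ℝ) / (n : ℝ))
        = ∑ i ∈ Finset.Icc (-(k : ℤ)) (k : ℤ),
            (((m0 : ℝ) + (if Int.fract (θ + (i : ℝ) * α - (1 - r)) < r then (1:ℝ) else 0)) / (n : ℝ)) := by
      apply Finset.sum_congr rfl
      intro i _
      rw [hterm i]
      push_cast
      split_ifs <;> norm_num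
    rw [hsum1]
    have hsum2 : ∑ i ∈ Finset.Icc (-(k : ℤ)) (k : ℤ),
        (((m0 : ℝ) + (if Int.fract (θ + (i : ℝ) * α - (1 - r)) < r then (1:ℝ) else 0)) / (n : ℝ))
        = ((2 * (k:ℝ) + 1) * (m0 : ℝ) + (cnt θ α (1 - r) r k : ℝ)) / (n : ℝ) := by
      rw [← Finset.sum_div]
      congr 1
      have hite : (∑ i ∈ Finset.Icc (-(k:ℤ)) (k:ℤ),
          (if Int.fract (θ + (i:ℝ) * α - (1 - r)) < r then (1:ℝ) else 0))
          = (cnt θ α (1 - r) r k : ℝ) := by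
        rw [Finset.sum_boole, cnt]
      rw [Finset.sum_add_distrib, hite, Finset.sum_const, hcard, nsmul_eq_mul]
      push_cast
      ring
    rw [hsum2]
    field_simp
  have heq : (fun k : ℕ =>
      (1 / (2 * (k : ℝ) + 1)) *
          ∑ i ∈ Finset.Icc (-(k : ℤ)) (k : ℤ),
            ((((Lam n (Int.fract y) (Int.fract (x + (i : ℝ) * α))).2.2 -
                (Lam n (Int.fract y) (Int.fract (x + (i : ℝ) * α))).2.1 : ℤ) : ℝ) /
              (n : ℝ)))
      = fun k : ℕ => (m0 : ℝ) / n + ((cnt θ α (1 - r) r k : ℝ) / (2 * (k : ℝ) + 1)) / n := by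
    funext k; exact hsum k
  rw [heq]
  have hy_eq : (m0 : ℝ) / n + r / n = y := by
    have : (m0 : ℝ) + r = (n : ℝ) * y := by
      rw [hm0, hr]; linarith [Int.floor_add_fract ((n:ℝ) * y)]
    field_simp
    linarith [this]
  rw [← hy_eq]
  exact ((tendsto_cnt θ α (1 - r) r hirr hr0 hr1).div_const (n:ℝ)).const_add _

end MetallicMean
end

section
/- For every integer n ≥ 1, the metallic mean Wang shift Ω_n is aperiodic: Ω_n is nonempty, and for every valid configuration w ∈ Ω_n and every k ∈ ℤ² with k ≠ (0,0), one has σ^k(w) ≠ w. -/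
open scoped BigOperators

namespace MetallicMean

lemma beta_facts (n : ℤ) (hn : 1 ≤ n) :
    beta n ^ 2 = n * beta n + 1 ∧ (n : ℝ) < beta n ∧ beta n < n + 1 := by
  have h4 : (0:ℝ) ≤ (n:ℝ)^2 + 4 := by positivity
  have hs := Real.sq_sqrt h4
  have hsnn := Real.sqrt_nonneg ((n:ℝ)^2 + 4)
  have hn' : (1:ℝ) ≤ (n:ℝ) := by exact_mod_cast hn
  have hgt : (n:ℝ) < Real.sqrt ((n:ℝ)^2 + 4) := by nlinarith [hs, hsnn]
  have hlt : Real.sqrt ((n:ℝ)^2 + 4) < (n:ℝ) + 2 := by nlinarith [hs, hsnn]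
  refine ⟨?_, ?_, ?_⟩
  · unfold beta; nlinarith [hs]
  · unfold beta; nlinarith
  · unfold beta; nlinarith

lemma gdef (n : ℤ) (hn : 1 ≤ n) :
    ∃ b g : ℝ, beta n = b ∧ (beta n)⁻¹ = g ∧ betaStar n = -g ∧
      b * g = 1 ∧ (n:ℝ) + g = b ∧ 0 < g ∧ g < 1 ∧ (n:ℝ) * g = 1 - g * g := by
  obtain ⟨hsq, hgt, hlt⟩ := beta_facts n hn
  have hn' : (1:ℝ) ≤ (n:ℝ) := by exact_mod_cast hn
  have hbpos : 0 < beta n := by linarith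
  have hbne : beta n ≠ 0 := ne_of_gt hbpos
  refine ⟨beta n, beta n - n, rfl, ?_, ?_, ?_, by ring, by linarith, by linarith, ?_⟩
  · rw [inv_eq_iff_eq_inv, eq_comm, inv_eq_iff_eq_inv]
    · field_simp
      nlinarith [hsq]
  · unfold betaStar; ring
  · nlinarith [hsq]
  · nlinarith [hsq]

lemma fract_shift (c x : ℝ) : Int.fract (x + c) = Int.fract (Int.fract x + c) := by
  have h : x + c = (Int.fract x + c) + (⌊x⌋ : ℤ) := by rw [Int.fract]; ring
  rw [h, Int.fract_add_intCast]

lemma floor_eval {z : ℝ} {k : ℤ} (h1 : (k:ℝ) ≤ z) (h2 : z < k + 1) : ⌊z⌋ = k :=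
  Int.floor_eq_iff.mpr ⟨h1, h2⟩

/-- all per-tile facts at once -/
lemma tile_core (n : ℤ) (hn : 1 ≤ n) (x y : ℝ) :
    (right (TileAt n x y)).1 = (left (TileAt n x y)).1 ∧
    (0 ≤ (left (TileAt n x y)).1 ∧ (left (TileAt n x y)).1 ≤ 1) ∧
    (0 ≤ (left (TileAt n x y)).2.2 ∧ (left (TileAt n x y)).2.2 ≤ n + 1) ∧
    ((right (TileAt n x y)).2.2 = if (bottom (TileAt n x y)).1 = 0 then
        (bottom (TileAt n x y)).2.1 + (left (TileAt n x y)).1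
      else (left (TileAt n x y)).2.2 + 1) ∧
    ((right (TileAt n x y)).2.1 = if (left (TileAt n x y)).1 = 0 then
        (bottom (TileAt n x y)).2.2 - n else 1) := by
  obtain ⟨b, g, hb, hinv, hstar, hb1, hbg, h0g, hg1, hng⟩ := gdef n hn
  have hn' : (1:ℝ) ≤ (n:ℝ) := by exact_mod_cast hn
  have hbpos : (0:ℝ) < b := by nlinarith
  have hgb1 : g * b = 1 := by rw [mul_comm]; exact hb1
  have hexp : ∀ u v : ℝ, g * (b * u + v) = u + g * v := by
    intro u v; rw [mul_add, ← mul_assoc, hgb1, one_mul]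
  have hmle : ∀ u v c : ℝ, c ≤ b * u + v → g * c ≤ u + g * v := by
    intro u v c h
    have h2 := mul_le_mul_of_nonneg_left h h0g.le
    rw [hexp u v] at h2; exact h2
  have hmlt : ∀ u v c : ℝ, b * u + v < c → u + g * v < g * c := by
    intro u v c h
    have h2 := mul_lt_mul_of_pos_left h h0g
    rw [hexp u v] at h2; exact h2
  set X := Int.fract x with hXdef
  set Y := Int.fract y with hYdef
  have hX0 : 0 ≤ X := Int.fract_nonneg x
  have hX1 : X < 1 := Int.fract_lt_one x
  have hY0 : 0 ≤ Y := Int.fract_nonneg y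
  have hY1 : Y < 1 := Int.fract_lt_one y
  have hgX0 : 0 ≤ g * X := mul_nonneg h0g.le hX0
  have hgY0 : 0 ≤ g * Y := mul_nonneg h0g.le hY0
  have hbX0 : 0 ≤ b * X := mul_nonneg hbpos.le hX0
  have hbY0 : 0 ≤ b * Y := mul_nonneg hbpos.le hY0
  have hgX1 : g * X < g := by have := mul_lt_mul_of_pos_left hX1 h0g; rwa [mul_one] at this
  have hgY1 : g * Y < g := by have := mul_lt_mul_of_pos_left hY1 h0g; rwa [mul_one] at this
  have hgg0 : (0:ℝ) ≤ g * g := mul_nonneg h0g.le h0g.le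
  have hgg1 : g * g < g := by have := mul_lt_mul_of_pos_left hg1 h0g; rwa [mul_one] at this
  have hfr : ∀ z : ℝ, 0 ≤ z → z < 1 →
      Int.fract (z + -g) = if z < g then z + 1 - g else z - g := by
    intro z h0 h1
    split
    · next h =>
      have hfl : ⌊z + -g⌋ = -1 := floor_eval (by push_cast; linarith) (by push_cast; linarith)
      rw [← Int.self_sub_floor, hfl]; push_cast; ring
    · next h =>
      rw [Int.fract_eq_self.mpr ⟨by linarith [not_lt.mp h], by linarith⟩]; ring
  have hX' : Int.fract (x + betaStar n) = if X < g then X + 1 - g else X - g := by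
    rw [hstar, fract_shift, ← hXdef]; exact hfr X hX0 hX1
  have hY' : Int.fract (y + betaStar n) = if Y < g then Y + 1 - g else Y - g := by
    rw [hstar, fract_shift, ← hYdef]; exact hfr Y hY0 hY1
  have hu1 : ∀ z : ℝ, 0 ≤ z → z < 1 → ⌊z + -g + 1⌋ = if z < g then 0 else 1 := by
    intro z h0 h1
    split
    · next h => exact floor_eval (by push_cast; linarith) (by push_cast; linarith)
    · next h => exact floor_eval (by push_cast; linarith [not_lt.mp h]) (by push_cast; linarith)
  refine ⟨rfl, ?_, ?_, ?_, ?_⟩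
  · show 0 ≤ ⌊Y + betaStar n + 1⌋ ∧ ⌊Y + betaStar n + 1⌋ ≤ 1
    rw [hstar, hu1 Y hY0 hY1]
    split <;> omega
  · show 0 ≤ ⌊beta n * Int.fract (x + betaStar n) + Y + betaStar n + 1⌋ ∧
      ⌊beta n * Int.fract (x + betaStar n) + Y + betaStar n + 1⌋ ≤ n + 1
    set Z := Int.fract (x + betaStar n) with hZdef
    have hZ0 : 0 ≤ Z := Int.fract_nonneg _
    have hZ1 : Z < 1 := Int.fract_lt_one _
    have hbZ0 : 0 ≤ b * Z := mul_nonneg hbpos.le hZ0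
    have hbZ1 : b * Z < b := by have := mul_lt_mul_of_pos_left hZ1 hbpos; rwa [mul_one] at this
    rw [hb, hstar]
    constructor
    · exact Int.le_floor.mpr (by push_cast; linarith)
    · have h2 : ⌊b * Z + Y + -g + 1⌋ < n + 2 := Int.floor_lt.mpr (by push_cast; linarith)
      omega
  · -- r3 identity
    show ⌊beta n * X + Y + betaStar n + 1⌋ = if ⌊X + betaStar n + 1⌋ = 0 then
        ⌊(beta n)⁻¹ * Int.fract (y + betaStar n) + X + betaStar n + 1⌋ + ⌊Y + betaStar n + 1⌋
      else ⌊beta n * Int.fract (x + betaStar n) + Y + betaStar n + 1⌋ + 1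
    rw [hX', hY', hinv, hb, hstar, hu1 X hX0 hX1, hu1 Y hY0 hY1]
    by_cases hXg : X < g
    · rw [if_pos hXg, if_pos hXg, if_pos rfl]
      have hbX1 : b * X < 1 := by
        have := mul_lt_mul_of_pos_left hXg hbpos; linarith [hb1]
      by_cases hYg : Y < g
      · rw [if_pos hYg, if_pos hYg]
        have hgYgg : g * Y < g * g := mul_lt_mul_of_pos_left hYg h0g
        rcases le_or_gt g (b * X + Y) with h | h
        · have hp := hmle X Y g h
          have e1 : ⌊b * X + Y + -g + 1⌋ = 1 :=
            floor_eval (by push_cast; linarith) (by push_cast; linarith)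
          have e2 : ⌊g * (Y + 1 - g) + X + -g + 1⌋ = 1 := by
            have hex : g * (Y + 1 - g) = g * Y + g - g * g := by ring
            exact floor_eval (by push_cast; rw [hex]; linarith)
              (by push_cast; rw [hex]; linarith)
          rw [e1, e2]; norm_num
        · have hp := hmlt X Y g h
          have e1 : ⌊b * X + Y + -g + 1⌋ = 0 :=
            floor_eval (by push_cast; linarith) (by push_cast; linarith)
          have e2 : ⌊g * (Y + 1 - g) + X + -g + 1⌋ = 0 := by
            have hex : g * (Y + 1 - g) = g * Y + g - g * g := by ring
            exact floor_eval (by push_cast; rw [hex]; linarith)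
              (by push_cast; rw [hex]; linarith)
          rw [e1, e2]; norm_num
      · rw [if_neg hYg, if_neg hYg]
        have hYg' : g ≤ Y := not_lt.mp hYg
        rcases le_or_gt (1 + g) (b * X + Y) with h | h
        · have hp := hmle X Y (1 + g) h
          have hpe : g * (1 + g) = g + g * g := by ring
          have e1 : ⌊b * X + Y + -g + 1⌋ = 2 :=
            floor_eval (by push_cast; linarith) (by push_cast; linarith)
          have e2 : ⌊g * (Y - g) + X + -g + 1⌋ = 1 := by
            have hex : g * (Y - g) = g * Y - g * g := by ring
            exact floor_eval (by push_cast; rw [hex]; linarith [hpe])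
              (by push_cast; rw [hex]; linarith)
          rw [e1, e2]; norm_num
        · have hp := hmlt X Y (1 + g) h
          have hpe : g * (1 + g) = g + g * g := by ring
          have hggY : g * g ≤ g * Y := mul_le_mul_of_nonneg_left hYg' h0g.le
          have e1 : ⌊b * X + Y + -g + 1⌋ = 1 :=
            floor_eval (by push_cast; linarith) (by push_cast; linarith)
          have e2 : ⌊g * (Y - g) + X + -g + 1⌋ = 0 := by
            have hex : g * (Y - g) = g * Y - g * g := by ring
            exact floor_eval (by push_cast; rw [hex]; linarith)
              (by push_cast; rw [hex]; linarith [hpe])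
          rw [e1, e2]; norm_num
    · rw [if_neg hXg, if_neg hXg, if_neg (by norm_num)]
      rw [show b * (X - g) + Y + -g + 1 = (b * X + Y + -g + 1) - ((1:ℤ):ℝ) by
        push_cast; linear_combination -hb1, Int.floor_sub_intCast]
      ring
  · -- r2 identity
    show ⌊(beta n)⁻¹ * X + Y + betaStar n + 1⌋ = if ⌊Y + betaStar n + 1⌋ = 0 then
        ⌊beta n * Int.fract (y + betaStar n) + X + betaStar n + 1⌋ - n else 1
    rw [hY', hinv, hb, hstar, hu1 Y hY0 hY1]
    by_cases hYg : Y < g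
    · rw [if_pos hYg, if_pos hYg, if_pos rfl]
      rw [show b * (Y + 1 - g) + X + -g + 1 = (b * Y + X) + ((n:ℤ):ℝ) by
        push_cast; linear_combination -hb1 - hbg, Int.floor_add_intCast]
      have hbY1 : b * Y < 1 := by
        have := mul_lt_mul_of_pos_left hYg hbpos; linarith [hb1]
      rcases le_or_gt 1 (b * Y + X) with h | h
      · have hp := hmle Y X 1 h
        have hpe : g * 1 = g := by ring
        have e1 : ⌊g * X + Y + -g + 1⌋ = 1 :=
          floor_eval (by push_cast; linarith [hpe]) (by push_cast; linarith)
        have e2 : ⌊b * Y + X⌋ = 1 :=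
          floor_eval (by push_cast; linarith) (by push_cast; linarith)
        rw [e1, e2]; ring
      · have hp := hmlt Y X 1 h
        have hpe : g * 1 = g := by ring
        have e1 : ⌊g * X + Y + -g + 1⌋ = 0 :=
          floor_eval (by push_cast; linarith) (by push_cast; linarith [hpe])
        have e2 : ⌊b * Y + X⌋ = 0 :=
          floor_eval (by push_cast; linarith) (by push_cast; linarith)
        rw [e1, e2]; ring
    · rw [if_neg hYg, if_neg (by norm_num)]
      have hYg' : g ≤ Y := not_lt.mp hYg
      exact floor_eval (by push_cast; linarith) (by push_cast; linarith)

lemma reflect_TileAt (n : ℤ) (x y : ℝ) : reflect (TileAt n x y) = TileAt n y x := rfl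

lemma tile_facts (n : ℤ) (hn : 1 ≤ n) (τ : Tile) (hτ : τ ∈ Tset n) :
    (right τ).1 = (left τ).1 ∧ (top τ).1 = (bottom τ).1 ∧
    (0 ≤ (left τ).1 ∧ (left τ).1 ≤ 1) ∧ (0 ≤ (bottom τ).1 ∧ (bottom τ).1 ≤ 1) ∧
    (0 ≤ (left τ).2.2 ∧ (left τ).2.2 ≤ n + 1) ∧
    (0 ≤ (bottom τ).2.2 ∧ (bottom τ).2.2 ≤ n + 1) ∧
    ((right τ).2.2 = if (bottom τ).1 = 0 then (bottom τ).2.1 + (left τ).1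
      else (left τ).2.2 + 1) ∧
    ((right τ).2.1 = if (left τ).1 = 0 then (bottom τ).2.2 - n else 1) ∧
    ((top τ).2.2 = if (left τ).1 = 0 then (left τ).2.1 + (bottom τ).1
      else (bottom τ).2.2 + 1) ∧
    ((top τ).2.1 = if (bottom τ).1 = 0 then (left τ).2.2 - n else 1) := by
  obtain ⟨x, y, _, _, rfl⟩ := hτ
  obtain ⟨h1, h2, h3, h4, h5⟩ := tile_core n hn x y
  obtain ⟨h1', h2', h3', h4', h5'⟩ := tile_core n hn y x
  exact ⟨h1, h1', h2, h2', h3, h3', h4, h5, h4', h5'⟩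

lemma int_const {γ : Type*} (f : ℤ → γ) (h : ∀ i, f (i + 1) = f i) : ∀ i, f i = f 0 := by
  intro i
  induction i using Int.induction_on with
  | zero => rfl
  | succ k ih => rw [h (k : ℤ), ih]
  | pred k ih =>
      have h2 := h (-(k : ℤ) - 1)
      rw [show (-(k:ℤ) - 1) + 1 = -(k:ℤ) by ring] at h2
      rw [← h2]
      exact ih

lemma sum_tel (f : ℤ → ℤ) (M : ℕ) :
    ∑ t ∈ Finset.range M, (f ((t : ℤ) + 1) - f t) = f M - f 0 := by
  induction M with
  | zero => simp
  | succ m ih => rw [Finset.sum_range_succ, ih]; push_cast; ring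

lemma window_step (f : ℤ → ℤ) (m : ℕ) (j : ℤ) :
    (∑ t ∈ Finset.range m, f ((j + 1) + t)) =
      (∑ t ∈ Finset.range m, f (j + t)) + f (j + m) - f j := by
  induction m with
  | zero => simp
  | succ k ih =>
      rw [Finset.sum_range_succ, Finset.sum_range_succ, ih,
        show (j + 1) + ((k:ℕ):ℤ) = j + (((k+1:ℕ)):ℤ) by push_cast; ring]
      ring

lemma sum_bound (f : ℤ → ℤ) (C : ℤ) (hC : ∀ j, |f j| ≤ C) (m : ℕ) (s : ℤ) :
    |∑ t ∈ Finset.range m, f (s + t)| ≤ m * C := by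
  calc |∑ t ∈ Finset.range m, f (s + t)| ≤ ∑ t ∈ Finset.range m, |f (s + t)| :=
        Finset.abs_sum_le_sum_abs _ _
    _ ≤ ∑ _t ∈ Finset.range m, C := Finset.sum_le_sum (fun t _ => hC _)
    _ = m * C := by rw [Finset.sum_const, Finset.card_range]; ring

lemma shift_cob (f : ℤ → ℤ) (C : ℤ) (hC : ∀ j, |f j| ≤ C) (d : ℤ) :
    ∃ W : ℤ → ℤ, (∀ j, f (j + d) - f j = W (j + 1) - W j) ∧ ∀ j, |W j| ≤ |d| * C := by
  rcases le_or_gt 0 d with hd | hd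
  · have hm : ((d.toNat : ℕ) : ℤ) = d := Int.toNat_of_nonneg hd
    refine ⟨fun j => ∑ t ∈ Finset.range d.toNat, f (j + t), fun j => ?_, fun j => ?_⟩
    · show f (j + d) - f j =
        (∑ t ∈ Finset.range d.toNat, f ((j + 1) + t)) - ∑ t ∈ Finset.range d.toNat, f (j + t)
      rw [window_step, hm]; ring
    · show |∑ t ∈ Finset.range d.toNat, f (j + t)| ≤ |d| * C
      rw [abs_of_nonneg hd, ← hm]
      exact sum_bound f C hC _ _
  · have hm : (((-d).toNat : ℕ) : ℤ) = -d := Int.toNat_of_nonneg (by linarith)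
    refine ⟨fun j => -∑ t ∈ Finset.range (-d).toNat, f ((j + d) + t), fun j => ?_, fun j => ?_⟩
    · show f (j + d) - f j =
        (-∑ t ∈ Finset.range (-d).toNat, f (((j + 1) + d) + t)) -
          (-∑ t ∈ Finset.range (-d).toNat, f ((j + d) + t))
      rw [show (j + 1) + d = (j + d) + 1 by ring, window_step, hm,
        show j + d + -d = j by ring]
      ring
    · show |-∑ t ∈ Finset.range (-d).toNat, f ((j + d) + t)| ≤ |d| * C
      rw [abs_neg, abs_of_neg hd, ← hm]
      exact sum_bound f C hC _ _

lemma per_iter (f : ℤ → ℤ) (q : ℕ) (h : ∀ j, f (j + q) = f j) :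
    ∀ (N : ℕ) (j : ℤ), f (j + N * q) = f j := by
  intro N
  induction N with
  | zero => intro j; simp
  | succ m ih =>
      intro j
      have e : j + ((m+1 : ℕ) : ℤ) * q = (j + m * q) + q := by push_cast; ring
      rw [e, h, ih]

lemma periodic_sum (f : ℤ → ℤ) (q : ℕ) (h : ∀ j, f (j + q) = f j) (N : ℕ) :
    ∑ t ∈ Finset.range (N * q), f t = N * ∑ t ∈ Finset.range q, f t := by
  induction N with
  | zero => simp
  | succ m ih =>
      rw [show (m + 1) * q = m * q + q by ring, Finset.sum_range_add, ih]
      have key : ∀ t ∈ Finset.range q, f (((m * q + t : ℕ) : ℤ)) = f (t : ℤ) := by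
        intro t _
        rw [show ((m * q + t : ℕ) : ℤ) = (t : ℤ) + m * q by push_cast; ring]
        exact per_iter f q h m t
      rw [Finset.sum_congr rfl key]
      push_cast; ring

lemma sum_shift_one (f : ℤ → ℤ) (p : ℕ) (hp : 0 < p) (hf : ∀ k, f (k + p) = f k) :
    ∑ k ∈ Finset.range p, f ((k : ℤ) - 1) = ∑ k ∈ Finset.range p, f k := by
  obtain ⟨m, rfl⟩ : ∃ m, p = m + 1 := ⟨p - 1, by omega⟩
  rw [Finset.sum_range_succ' (fun k : ℕ => f ((k : ℤ) - 1)) m, Finset.sum_range_succ]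
  have h1 : ∀ k ∈ Finset.range m, f (((k + 1 : ℕ) : ℤ) - 1) = f (k : ℤ) := by
    intro k _
    rw [show (((k + 1 : ℕ)) : ℤ) - 1 = (k : ℤ) by push_cast; ring]
  rw [Finset.sum_congr rfl h1]
  have h2 : f ((((0:ℕ)) : ℤ) - 1) = f (m : ℤ) := by
    have h3 := hf (-1)
    rw [show (-1 : ℤ) + ((m + 1 : ℕ) : ℤ) = (m : ℤ) by push_cast; ring] at h3
    rw [show ((((0:ℕ)) : ℤ) - 1) = (-1 : ℤ) by norm_num, ← h3]
  rw [h2]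

lemma bounded_forcing (K C : ℤ) (h : ∀ M : ℕ, |(M : ℤ) * K| ≤ C) : K = 0 := by
  by_contra hK
  have h1 : 1 ≤ |K| := Int.one_le_abs (by omega)
  have hC : 0 ≤ C := le_trans (abs_nonneg _) (h 0)
  have h2 := h (C.toNat + 1)
  rw [abs_mul] at h2
  have h3 : |((C.toNat + 1 : ℕ) : ℤ)| = C + 1 := by
    rw [abs_of_nonneg (by positivity)]; push_cast; omega
  rw [h3] at h2
  nlinarith [h1, h2]

lemma quad_no_sol (n : ℤ) (hn : 1 ≤ n) (B P : ℤ) (hP : 1 ≤ P)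
    (h : B ^ 2 - (n + 2) * P * B + n * P ^ 2 = 0) : False := by
  have key : (2 * B - (n + 2) * P) ^ 2 = (n ^ 2 + 4) * P ^ 2 := by linear_combination 4 * h
  set d := 2 * B - (n + 2) * P with hd
  have hPne : (P : ℝ) ≠ 0 := by exact_mod_cast (by omega : P ≠ 0)
  have hxr : ((d : ℝ) / (P : ℝ)) ^ 2 = ((n ^ 2 + 4 : ℤ) : ℝ) := by
    have key' : ((d:ℝ))^2 = ((n:ℝ)^2+4) * (P:ℝ)^2 := by exact_mod_cast key
    field_simp
    push_cast
    linear_combination key'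
  have hrat : ¬ Irrational ((d : ℝ) / (P : ℝ)) := by
    rw [show ((d : ℝ) / (P : ℝ)) = (((d : ℚ) / (P : ℚ) : ℚ) : ℝ) by push_cast; ring]
    exact Rat.not_irrational _
  have hex : ∃ y : ℤ, ((d : ℝ) / (P : ℝ)) = (y : ℝ) := by
    by_contra hno
    exact hrat (irrational_nrt_of_notint_nrt 2 (n ^ 2 + 4) hxr hno (by norm_num))
  obtain ⟨y, hy⟩ := hex
  rw [hy] at hxr
  have hyz : y ^ 2 = n ^ 2 + 4 := by exact_mod_cast hxr
  have habs : |y| ^ 2 = n ^ 2 + 4 := by rw [sq_abs]; exact hyz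
  have h0 : 0 ≤ |y| := abs_nonneg y
  set z := |y| with hz
  have hge : n + 1 ≤ z := by
    by_contra hc
    push_neg at hc
    nlinarith
  have hle : z ≤ n + 1 := by
    by_contra hc
    push_neg at hc
    nlinarith
  have : z = n + 1 := le_antisymm hle hge
  rw [this] at habs
  have h23 : 2 * n = 3 := by linear_combination habs
  omega

def aF (w : Config) (j : ℤ) : ℤ := (left (w (0, j))).1
def bF (w : Config) (i : ℤ) : ℤ := (bottom (w (i, 0))).1
def U3 (w : Config) (i j : ℤ) : ℤ := (left (w (i, j))).2.2
def V3 (w : Config) (i j : ℤ) : ℤ := (bottom (w (i, j))).2.2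

lemma cell_rel (n : ℤ) (hn : 1 ≤ n) (w : Config) (hw : IsValid (Tset n) w) :
    (∀ i j : ℤ, (left (w (i, j))).1 = aF w j) ∧
    (∀ i j : ℤ, (bottom (w (i, j))).1 = bF w i) ∧
    (∀ j, 0 ≤ aF w j ∧ aF w j ≤ 1) ∧ (∀ i, 0 ≤ bF w i ∧ bF w i ≤ 1) ∧
    (∀ i j, 0 ≤ U3 w i j ∧ U3 w i j ≤ n + 1) ∧
    (∀ i j, 0 ≤ V3 w i j ∧ V3 w i j ≤ n + 1) ∧
    (∀ i j, U3 w (i+1) j = if bF w i = 0 then U3 w i (j-1) + aF w j - n else U3 w i j + 1) ∧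
    (∀ i j, V3 w i (j+1) = if aF w j = 0 then V3 w (i-1) j + bF w i - n else V3 w i j + 1) := by
  obtain ⟨hmem, hmatch⟩ := hw
  have hH : ∀ i j : ℤ, right (w (i, j)) = left (w (i + 1, j)) := by
    intro i j
    have := (hmatch (i, j)).1
    rwa [show ((i, j) : ℤ × ℤ) + (1, 0) = (i + 1, j) by simp] at this
  have hV : ∀ i j : ℤ, top (w (i, j)) = bottom (w (i, j + 1)) := by
    intro i j
    have := (hmatch (i, j)).2
    rwa [show ((i, j) : ℤ × ℤ) + (0, 1) = (i, j + 1) by simp] at this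
  have tf := fun p : ℤ × ℤ => tile_facts n hn (w p) (hmem p)
  have hL1 : ∀ i j : ℤ, (left (w (i, j))).1 = aF w j := by
    intro i j
    have step : ∀ i : ℤ, (left (w (i + 1, j))).1 = (left (w (i, j))).1 := by
      intro i
      rw [← hH i j]
      exact (tf (i, j)).1
    exact int_const (fun i => (left (w (i, j))).1) step i
  have hB1 : ∀ i j : ℤ, (bottom (w (i, j))).1 = bF w i := by
    intro i j
    have step : ∀ j : ℤ, (bottom (w (i, j + 1))).1 = (bottom (w (i, j))).1 := by
      intro j
      rw [← hV i j]
      exact (tf (i, j)).2.1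
    exact int_const (fun j => (bottom (w (i, j))).1) step j
  refine ⟨hL1, hB1, ?_, ?_, ?_, ?_, ?_, ?_⟩
  · intro j; exact (tf (0, j)).2.2.1
  · intro i; exact (tf (i, 0)).2.2.2.1
  · intro i j; exact (tf (i, j)).2.2.2.2.1
  · intro i j; exact (tf (i, j)).2.2.2.2.2.1
  · -- row step
    intro i j
    have h1 : U3 w (i + 1) j = (right (w (i, j))).2.2 := by
      unfold U3; rw [hH i j]
    have h2 := (tf (i, j)).2.2.2.2.2.2.1
    have h3 : (bottom (w (i, j))).2.1 = (top (w (i, j - 1))).2.1 := by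
      rw [hV i (j - 1), show j - 1 + 1 = j by ring]
    have h4 := (tf (i, j - 1)).2.2.2.2.2.2.2.2.2
    rw [h1, h2, h3, h4, hB1 i j, hB1 i (j - 1), hL1 i j]
    by_cases hb : bF w i = 0
    · rw [if_pos hb, if_pos hb, if_pos hb]
      unfold U3 aF; ring
    · rw [if_neg hb, if_neg hb]
      rfl
  · -- column step
    intro i j
    have h1 : V3 w i (j + 1) = (top (w (i, j))).2.2 := by
      unfold V3; rw [← hV i j]
    have h2 := (tf (i, j)).2.2.2.2.2.2.2.2.1
    have h3 : (left (w (i, j))).2.1 = (right (w (i - 1, j))).2.1 := by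
      rw [hH (i - 1) j, show i - 1 + 1 = i by ring]
    have h4 := (tf (i - 1, j)).2.2.2.2.2.2.2.1
    rw [h1, h2, h3, h4, hL1 i j, hL1 (i - 1) j, hB1 i j]
    by_cases ha : aF w j = 0
    · rw [if_pos ha, if_pos ha, if_pos ha]
      unfold V3 bF; ring
    · rw [if_neg ha, if_neg ha]
      rfl

lemma prodmk_add (a b c d : ℤ) : ((a, b) : ℤ × ℤ) + (c, d) = (a + c, b + d) := rfl

theorem fbound (n : ℤ) (hn : 1 ≤ n) (w : Config) (hw : IsValid (Tset n) w)
    (P Q : ℤ) (hP : 0 < P)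
    (hper : ∀ m : ℤ × ℤ, w (m + (P, Q)) = w m) :
    ∀ M : ℕ, |(∑ i ∈ Finset.range P.toNat, bF w i) * M
      + (P - ∑ i ∈ Finset.range P.toNat, bF w i)
        * ((∑ t ∈ Finset.range M, aF w t) - n * M)|
      ≤ 2 * |Q| * (n + 1) + 2 * P * (n + 1) := by
  obtain ⟨hL1, hB1, ha01, hb01, hU3b, hV3b, hrow, hcol⟩ := cell_rel n hn w hw
  set p := P.toNat with hp
  have hpP : ((p : ℕ) : ℤ) = P := Int.toNat_of_nonneg hP.le
  set B := ∑ i ∈ Finset.range p, bF w i with hB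
  -- periodicity of cell data
  have hwp : ∀ i j : ℤ, w (i + P, j + Q) = w (i, j) := by
    intro i j
    have := hper (i, j)
    rwa [prodmk_add] at this
  have haper : ∀ j, aF w (j + Q) = aF w j := by
    intro j
    have hw0 : w ((0 : ℤ), j + Q) = w (-P, j) := by
      have := hwp (-P) j
      rwa [show (-P + P : ℤ) = 0 by ring] at this
    rw [← hL1 0 (j + Q), ← hL1 (-P) j, hw0]
  have hU3P : ∀ j : ℤ, U3 w P j = U3 w 0 (j + -Q) := by
    intro j
    have hw1 : w ((P : ℤ), j) = w (0, j + -Q) := by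
      have := hwp 0 (j + -Q)
      rwa [show (0 + P : ℤ) = P by ring, show (j + -Q + Q : ℤ) = j by ring] at this
    unfold U3
    rw [hw1]
  -- the S function and the one-row identity
  set S : ℤ → ℤ := fun j => ∑ k ∈ Finset.range p, (if bF w k = 0 then U3 w k j else 0)
    with hSdef
  have hstar : ∀ j : ℤ, U3 w P j - U3 w 0 j
      = S (j - 1) - S j + (P - B) * (aF w j - n) + B := by
    intro j
    have hpt : ∀ k : ℤ, U3 w (k + 1) j - U3 w k j =
        ((if bF w k = 0 then U3 w k (j - 1) else 0) - (if bF w k = 0 then U3 w k j else 0)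
          + ((1 - bF w k) * (aF w j - n) + bF w k)) := by
      intro k
      rw [hrow k j]
      have hb := hb01 k
      have : bF w k = 0 ∨ bF w k = 1 := by omega
      rcases this with h | h <;> rw [h] <;> simp <;> ring
    have htel := sum_tel (fun i => U3 w i j) p
    rw [hpP] at htel
    calc U3 w P j - U3 w 0 j
        = ∑ k ∈ Finset.range p, (U3 w ((k : ℤ) + 1) j - U3 w k j) := htel.symm
      _ = ∑ k ∈ Finset.range p, ((if bF w (k : ℤ) = 0 then U3 w k (j - 1) else 0)
            - (if bF w k = 0 then U3 w k j else 0)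
            + ((1 - bF w k) * (aF w j - n) + bF w k)) :=
          Finset.sum_congr rfl (fun k _ => hpt (k : ℤ))
      _ = S (j - 1) - S j + (P - B) * (aF w j - n) + B := by
          simp only [hSdef]
          rw [Finset.sum_add_distrib, Finset.sum_sub_distrib, Finset.sum_add_distrib,
            ← Finset.sum_mul, Finset.sum_sub_distrib, Finset.sum_const, Finset.card_range,
            nsmul_eq_mul, mul_one, hpP, ← hB]
          ring
  -- bounds
  have hU3abs : ∀ j, |U3 w 0 j| ≤ n + 1 := by
    intro j
    have := hU3b 0 j
    rw [abs_le]; omega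
  obtain ⟨W, hWstep, hWb⟩ := shift_cob (U3 w 0) (n + 1) hU3abs (-Q)
  have hSb : ∀ j, |S j| ≤ P * (n + 1) := by
    intro j
    have h1 : |S j| ≤ ∑ k ∈ Finset.range p, |if bF w k = 0 then U3 w (k : ℤ) j else 0| :=
      Finset.abs_sum_le_sum_abs _ _
    have h2 : ∀ k : ℤ, |if bF w k = 0 then U3 w k j else 0| ≤ n + 1 := by
      intro k
      split
      · have := hU3b k j; rw [abs_le]; omega
      · rw [abs_zero]; omega
    calc |S j| ≤ ∑ k ∈ Finset.range p, |if bF w k = 0 then U3 w (k : ℤ) j else 0| := h1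
      _ ≤ ∑ _k ∈ Finset.range p, (n + 1) := Finset.sum_le_sum (fun k _ => h2 _)
      _ = P * (n + 1) := by rw [Finset.sum_const, Finset.card_range, nsmul_eq_mul, hpP]
  -- sum over a window of M rows
  have hFbound : ∀ M : ℕ, |B * M + (P - B) * ((∑ t ∈ Finset.range M, aF w t) - n * M)|
      ≤ 2 * |Q| * (n + 1) + 2 * P * (n + 1) := by
    intro M
    have hsum1 : ∑ t ∈ Finset.range M, (U3 w P (t : ℤ) - U3 w 0 t) = W M - W 0 := by
      have e0 : ∀ t ∈ Finset.range M, U3 w P (t : ℤ) - U3 w 0 t = W ((t : ℤ) + 1) - W t := by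
        intro t _
        rw [hU3P (t : ℤ)]
        exact hWstep (t : ℤ)
      rw [Finset.sum_congr rfl e0]
      exact sum_tel W M
    have hsum2 : ∑ t ∈ Finset.range M, (U3 w P (t : ℤ) - U3 w 0 t)
        = (S (0 - 1) - S ((M : ℤ) - 1))
          + ((P - B) * ((∑ t ∈ Finset.range M, aF w t) - n * M) + B * M) := by
      have e1 : ∀ t ∈ Finset.range M, U3 w P (t : ℤ) - U3 w 0 t =
          ((fun s : ℤ => -S (s - 1)) ((t : ℤ) + 1) - (fun s : ℤ => -S (s - 1)) t)
            + ((P - B) * (aF w t - n) + B) := by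
        intro t _
        rw [hstar (t : ℤ)]
        simp only [add_sub_cancel_right]
        ring
      have e2 := sum_tel (fun s : ℤ => -S (s - 1)) M
      rw [Finset.sum_congr rfl e1]
      rw [Finset.sum_add_distrib, e2, Finset.sum_add_distrib, ← Finset.mul_sum,
        Finset.sum_sub_distrib, Finset.sum_const, Finset.card_range, nsmul_eq_mul,
        Finset.sum_const, Finset.card_range, nsmul_eq_mul]
      push_cast
      ring
    have hWM := abs_le.mp (hWb M)
    have hW0 := abs_le.mp (hWb 0)
    have hS1 := abs_le.mp (hSb (0 - 1))
    have hSM := abs_le.mp (hSb ((M : ℤ) - 1))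
    have hQQ : |(-Q)| = |Q| := abs_neg Q
    rw [hQQ] at hWM hW0
    rw [abs_le]
    constructor <;> nlinarith [hsum1.symm.trans hsum2]
  exact hFbound

theorem masterRel (n : ℤ) (hn : 1 ≤ n) (w : Config) (hw : IsValid (Tset n) w)
    (P Q : ℤ) (hP : 0 < P) (hQ : Q ≠ 0)
    (hper : ∀ m : ℤ × ℤ, w (m + (P, Q)) = w m) :
    (Q.natAbs : ℤ) * (∑ i ∈ Finset.range P.toNat, bF w i)
      + (P - ∑ i ∈ Finset.range P.toNat, bF w i)
        * ((∑ j ∈ Finset.range Q.natAbs, aF w j) - n * Q.natAbs) = 0 := by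
  obtain ⟨hL1, hB1, ha01, hb01, hU3b, hV3b, hrow, hcol⟩ := cell_rel n hn w hw
  have hFbound := fbound n hn w hw P Q hP hper
  set p := P.toNat with hp
  set q := Q.natAbs with hq
  set B := ∑ i ∈ Finset.range p, bF w i with hB
  set A := ∑ j ∈ Finset.range q, aF w j with hA
  have hwp : ∀ i j : ℤ, w (i + P, j + Q) = w (i, j) := by
    intro i j
    have := hper (i, j)
    rwa [prodmk_add] at this
  have haper : ∀ j, aF w (j + Q) = aF w j := by
    intro j
    have hw0 : w ((0 : ℤ), j + Q) = w (-P, j) := by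
      have := hwp (-P) j
      rwa [show (-P + P : ℤ) = 0 by ring] at this
    rw [← hL1 0 (j + Q), ← hL1 (-P) j, hw0]
  have haq : ∀ j, aF w (j + (q : ℤ)) = aF w j := by
    intro j
    rcases lt_or_gt_of_ne hQ with hneg | hpos
    · have hqq : (q : ℤ) = -Q := by omega
      have := haper (j + (q : ℤ))
      rw [hqq] at this ⊢
      rw [show j + -Q + Q = j by ring] at this
      exact this.symm
    · have hqq : (q : ℤ) = Q := by omega
      rw [hqq]
      exact haper j
  have hforce : ∀ N : ℕ, |(N : ℤ) * ((q : ℤ) * B + (P - B) * (A - n * q))|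
      ≤ 2 * |Q| * (n + 1) + 2 * P * (n + 1) := by
    intro N
    have := hFbound (N * q)
    rw [periodic_sum (aF w) q haq N, ← hA] at this
    have e : B * ((N * q : ℕ) : ℤ) + (P - B) * ((N : ℤ) * A - n * ((N * q : ℕ) : ℤ))
        = (N : ℤ) * ((q : ℤ) * B + (P - B) * (A - n * q)) := by push_cast; ring
    rwa [e] at this
  exact bounded_forcing _ _ hforce

theorem masterZero (n : ℤ) (hn : 1 ≤ n) (w : Config) (hw : IsValid (Tset n) w)
    (P : ℤ) (hP : 0 < P) (hper : ∀ m : ℤ × ℤ, w (m + (P, 0)) = w m) : False := by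
  obtain ⟨hL1, hB1, ha01, hb01, hU3b, hV3b, hrow, hcol⟩ := cell_rel n hn w hw
  have hFbound := fbound n hn w hw P 0 hP hper
  set p := P.toNat with hp
  have hpP : ((p : ℕ) : ℤ) = P := Int.toNat_of_nonneg hP.le
  have hp0 : 0 < p := by omega
  set B := ∑ i ∈ Finset.range p, bF w i with hB
  have hwp : ∀ i j : ℤ, w (i + P, j) = w (i, j) := by
    intro i j
    have := hper (i, j)
    rwa [prodmk_add, add_zero] at this
  have hV3per : ∀ k : ℤ, ∀ j, V3 w (k + (p : ℤ)) j = V3 w k j := by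
    intro k j
    unfold V3
    rw [hpP, hwp k j]
  -- the column-sum function
  set T : ℤ → ℤ := fun j => ∑ k ∈ Finset.range p, V3 w k j with hTdef
  have hTstep : ∀ j : ℤ, T (j + 1) = T j + (if aF w j = 0 then B - n * P else P) := by
    intro j
    by_cases ha : aF w j = 0
    · rw [if_pos ha]
      have e1 : ∀ k ∈ Finset.range p, V3 w (k : ℤ) (j + 1)
          = (V3 w ((k : ℤ) - 1) j + bF w k) - n := by
        intro k _
        rw [hcol (k : ℤ) j, if_pos ha]
      have e2 : ∑ k ∈ Finset.range p, V3 w ((k : ℤ) - 1) j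
          = ∑ k ∈ Finset.range p, V3 w (k : ℤ) j :=
        sum_shift_one (fun k => V3 w k j) p hp0 (fun k => hV3per k j)
      simp only [hTdef]
      rw [Finset.sum_congr rfl e1, Finset.sum_sub_distrib, Finset.sum_add_distrib, e2,
        Finset.sum_const, Finset.card_range, nsmul_eq_mul, hpP, ← hB]
      ring
    · rw [if_neg ha]
      have e1 : ∀ k ∈ Finset.range p, V3 w (k : ℤ) (j + 1) = V3 w (k : ℤ) j + 1 := by
        intro k _
        rw [hcol (k : ℤ) j, if_neg ha]
      simp only [hTdef]
      rw [Finset.sum_congr rfl e1, Finset.sum_add_distrib, Finset.sum_const,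
        Finset.card_range, nsmul_eq_mul, mul_one, hpP]
  have hTsum : ∀ M : ℕ, ∑ t ∈ Finset.range M, (if aF w (t : ℤ) = 0 then B - n * P else P)
      = T M - T 0 := by
    intro M
    have e : ∀ t ∈ Finset.range M, (if aF w (t : ℤ) = 0 then B - n * P else P)
        = T ((t : ℤ) + 1) - T t := by
      intro t _
      rw [hTstep (t : ℤ)]
      ring
    rw [Finset.sum_congr rfl e]
    exact sum_tel T M
  have hTb : ∀ j, |T j| ≤ P * (n + 1) := by
    intro j
    have h2 : ∀ k : ℤ, |V3 w k j| ≤ n + 1 := by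
      intro k
      have := hV3b k j
      rw [abs_le]; omega
    calc |T j| ≤ ∑ k ∈ Finset.range p, |V3 w (k : ℤ) j| := Finset.abs_sum_le_sum_abs _ _
      _ ≤ ∑ _k ∈ Finset.range p, (n + 1) := Finset.sum_le_sum (fun k _ => h2 _)
      _ = P * (n + 1) := by rw [Finset.sum_const, Finset.card_range, nsmul_eq_mul, hpP]
  -- the key per-point combination
  set K := n * (B ^ 2 - (n + 2) * P * B + n * P ^ 2) with hK
  have hcomb : ∀ t : ℤ, (P - B) * (if aF w t = 0 then B - n * P else P)
      - (P - B + n * P) * (B + (P - B) * (aF w t - n)) = K := by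
    intro t
    have ha := ha01 t
    have : aF w t = 0 ∨ aF w t = 1 := by omega
    rcases this with h | h <;> rw [h] <;> simp <;> rw [hK] <;> ring
  have hforce : ∀ M : ℕ, |(M : ℤ) * K|
      ≤ |P - B| * (2 * P * (n + 1)) + |P - B + n * P| * (2 * |(0 : ℤ)| * (n + 1) + 2 * P * (n + 1)) := by
    intro M
    have h4 : ∑ t ∈ Finset.range M, (B + (P - B) * (aF w (t : ℤ) - n))
        = B * M + (P - B) * ((∑ t ∈ Finset.range M, aF w t) - n * M) := by
      rw [Finset.sum_add_distrib, ← Finset.mul_sum, Finset.sum_sub_distrib,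
        Finset.sum_const, Finset.card_range, nsmul_eq_mul, Finset.sum_const,
        Finset.card_range, nsmul_eq_mul]
      ring
    have h3 : (∑ t ∈ Finset.range M, ((P - B) * (if aF w (t : ℤ) = 0 then B - n * P else P)))
        - (∑ t ∈ Finset.range M, ((P - B + n * P) * (B + (P - B) * (aF w (t : ℤ) - n))))
        = (M : ℤ) * K := by
      calc (∑ t ∈ Finset.range M, ((P - B) * (if aF w (t : ℤ) = 0 then B - n * P else P)))
            - (∑ t ∈ Finset.range M, ((P - B + n * P) * (B + (P - B) * (aF w (t : ℤ) - n))))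
          = ∑ t ∈ Finset.range M, ((P - B) * (if aF w (t : ℤ) = 0 then B - n * P else P)
              - (P - B + n * P) * (B + (P - B) * (aF w (t : ℤ) - n))) :=
            (Finset.sum_sub_distrib _ _).symm
        _ = ∑ _t ∈ Finset.range M, K := Finset.sum_congr rfl (fun t _ => hcomb (t : ℤ))
        _ = (M : ℤ) * K := by rw [Finset.sum_const, Finset.card_range, nsmul_eq_mul]
    rw [← Finset.mul_sum, ← Finset.mul_sum, hTsum M, h4] at h3
    rw [← h3]
    have b1 := hTb M
    have b2 := hTb 0
    have b3 := hFbound M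
    calc |(P - B) * (T M - T 0) - (P - B + n * P) * (B * M
          + (P - B) * ((∑ t ∈ Finset.range M, aF w t) - n * M))|
        ≤ |(P - B) * (T M - T 0)| + |(P - B + n * P) * (B * M
          + (P - B) * ((∑ t ∈ Finset.range M, aF w t) - n * M))| := abs_sub _ _
      _ ≤ |P - B| * (2 * P * (n + 1)) + |P - B + n * P| * (2 * |(0:ℤ)| * (n + 1) + 2 * P * (n + 1)) := by
          rw [abs_mul, abs_mul]
          have c1 : |T M - T 0| ≤ 2 * P * (n + 1) := by
            have := abs_le.mp b1; have := abs_le.mp b2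
            rw [abs_le]; constructor <;> linarith [abs_le.mp b1, abs_le.mp b2]
          exact add_le_add (mul_le_mul_of_nonneg_left c1 (abs_nonneg _))
            (mul_le_mul_of_nonneg_left b3 (abs_nonneg _))
  have hK0 : K = 0 := bounded_forcing _ _ hforce
  have hquad : B ^ 2 - (n + 2) * P * B + n * P ^ 2 = 0 := by
    have h5 : n * (B ^ 2 - (n + 2) * P * B + n * P ^ 2) = 0 := by rw [← hK]; exact hK0
    rcases mul_eq_zero.mp h5 with h | h
    · omega
    · exact h
  exact quad_no_sol n hn B P (by omega) hquad

lemma perNeg (w : Config) (v : ℤ × ℤ) (h : ∀ m, w (m + v) = w m) : ∀ m, w (m + -v) = w m := by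
  intro m
  have h2 := h (m + -v)
  rw [neg_add_cancel_right] at h2
  exact h2.symm

lemma right_reflect (τ : Tile) : right (reflect τ) = top τ := rfl
lemma left_reflect (τ : Tile) : left (reflect τ) = bottom τ := rfl
lemma top_reflect (τ : Tile) : top (reflect τ) = right τ := rfl
lemma bottom_reflect (τ : Tile) : bottom (reflect τ) = left τ := rfl

lemma reflect_valid (n : ℤ) (w : Config) (hw : IsValid (Tset n) w) :
    IsValid (Tset n) (fun m : ℤ × ℤ => reflect (w (m.2, m.1))) := by
  obtain ⟨hmem, hmatch⟩ := hw
  constructor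
  · intro p
    obtain ⟨x, y, hx, hy, he⟩ := hmem (p.2, p.1)
    refine ⟨y, x, hy, hx, ?_⟩
    show reflect (w (p.2, p.1)) = TileAt n y x
    rw [he]
    rfl
  · intro p
    constructor
    · show right (reflect (w (p.2, p.1)))
        = left (reflect (w ((p + (1, 0)).2, (p + (1, 0)).1)))
      have e : (((p + ((1 : ℤ), (0 : ℤ))).2 : ℤ), (p + ((1 : ℤ), (0 : ℤ))).1)
          = ((p.2 : ℤ), p.1) + (0, 1) := by
        cases p; simp [prodmk_add]
      rw [right_reflect, left_reflect, e]
      exact (hmatch (p.2, p.1)).2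
    · show top (reflect (w (p.2, p.1)))
        = bottom (reflect (w ((p + (0, 1)).2, (p + (0, 1)).1)))
      have e : (((p + ((0 : ℤ), (1 : ℤ))).2 : ℤ), (p + ((0 : ℤ), (1 : ℤ))).1)
          = ((p.2 : ℤ), p.1) + (1, 0) := by
        cases p; simp [prodmk_add]
      rw [top_reflect, bottom_reflect, e]
      exact (hmatch (p.2, p.1)).1

lemma TileAt_mem (n : ℤ) (x y : ℝ) : TileAt n x y ∈ Tset n := by
  refine ⟨Int.fract x, Int.fract y, ⟨Int.fract_nonneg x, (Int.fract_lt_one x).le⟩,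
    ⟨Int.fract_nonneg y, (Int.fract_lt_one y).le⟩, ?_⟩
  show TileAt n x y = TileAt n (Int.fract x) (Int.fract y)
  unfold TileAt
  rw [Int.fract_fract, Int.fract_fract, ← fract_shift (betaStar n) x,
    ← fract_shift (betaStar n) y]

lemma omega_nonempty (n : ℤ) (hn : 1 ≤ n) :
    IsValid (Tset n) (fun m : ℤ × ℤ =>
      TileAt n (-(m.1 : ℝ) * betaStar n) (-(m.2 : ℝ) * betaStar n)) := by
  have hmatch : ∀ u v : ℝ, right (TileAt n u v) = left (TileAt n (u - betaStar n) v) := by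
    intro u v
    show Lam n (Int.fract u) (Int.fract v)
      = Lam n (Int.fract ((u - betaStar n) + betaStar n)) (Int.fract v)
    rw [show (u - betaStar n) + betaStar n = u by ring]
  have htop : ∀ u v : ℝ, top (TileAt n u v) = bottom (TileAt n u (v - betaStar n)) := by
    intro u v
    show Lam n (Int.fract v) (Int.fract u)
      = Lam n (Int.fract ((v - betaStar n) + betaStar n)) (Int.fract u)
    rw [show (v - betaStar n) + betaStar n = v by ring]
  constructor
  · intro p
    exact TileAt_mem n _ _
  · intro p
    constructor
    · have e1 : (p + ((1 : ℤ), (0 : ℤ))) = (p.1 + 1, p.2) := by cases p; simp [prodmk_add]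
      rw [e1]
      show right (TileAt n (-(p.1 : ℝ) * betaStar n) (-(p.2 : ℝ) * betaStar n))
        = left (TileAt n (-((p.1 + 1 : ℤ) : ℝ) * betaStar n) (-(p.2 : ℝ) * betaStar n))
      rw [show -((p.1 + 1 : ℤ) : ℝ) * betaStar n
          = -(p.1 : ℝ) * betaStar n - betaStar n by push_cast; ring]
      exact hmatch _ _
    · have e1 : (p + ((0 : ℤ), (1 : ℤ))) = (p.1, p.2 + 1) := by cases p; simp [prodmk_add]
      rw [e1]
      show top (TileAt n (-(p.1 : ℝ) * betaStar n) (-(p.2 : ℝ) * betaStar n))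
        = bottom (TileAt n (-(p.1 : ℝ) * betaStar n) (-((p.2 + 1 : ℤ) : ℝ) * betaStar n))
      rw [show -((p.2 + 1 : ℤ) : ℝ) * betaStar n
          = -(p.2 : ℝ) * betaStar n - betaStar n by push_cast; ring]
      exact htop _ _

theorem noPeriod (n : ℤ) (hn : 1 ≤ n) (w : Config) (hw : IsValid (Tset n) w)
    (P Q : ℤ) (hP : 0 < P) (hper : ∀ m : ℤ × ℤ, w (m + (P, Q)) = w m) : False := by
  by_cases hQ : Q = 0
  · subst hQ
    exact masterZero n hn w hw P hP hper
  · set w' : Config := fun m => reflect (w (m.2, m.1)) with hw'def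
    have hw' : IsValid (Tset n) w' := reflect_valid n w hw
    have hper' : ∀ m : ℤ × ℤ, w' (m + (Q, P)) = w' m := by
      intro m
      show reflect (w ((m + (Q, P)).2, (m + (Q, P)).1)) = reflect (w (m.2, m.1))
      have e : (((m + ((Q : ℤ), (P : ℤ))).2 : ℤ), (m + ((Q : ℤ), (P : ℤ))).1)
          = ((m.2 : ℤ), m.1) + (P, Q) := by cases m; simp [prodmk_add]
      rw [e, hper (m.2, m.1)]
    have hbw' : ∀ i, bF w' i = aF w i := by intro i; rw [hw'def]; rfl
    have haw' : ∀ j, aF w' j = bF w j := by intro j; rw [hw'def]; rfl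
    have h1 := masterRel n hn w hw P Q hP hQ hper
    have e3 : ((P.toNat : ℕ) : ℤ) = P := Int.toNat_of_nonneg hP.le
    have h2 : P * (∑ j ∈ Finset.range Q.natAbs, aF w j)
        + ((Q.natAbs : ℤ) - ∑ j ∈ Finset.range Q.natAbs, aF w j)
          * ((∑ i ∈ Finset.range P.toNat, bF w i) - n * P) = 0 := by
      rcases lt_or_gt_of_ne hQ with hneg | hpos
      · have hperneg : ∀ m : ℤ × ℤ, w' (m + (-Q, -P)) = w' m := by
          intro m
          have := perNeg w' (Q, P) hper' m
          rwa [show (-((Q : ℤ), (P : ℤ)) : ℤ × ℤ) = (-Q, -P) from rfl] at this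
        have h2' := masterRel n hn w' hw' (-Q) (-P) (by omega) (by omega) hperneg
        have e1 : (-Q).toNat = Q.natAbs := by omega
        have e2 : (-P).natAbs = P.toNat := by omega
        rw [e1, e2, e3] at h2'
        have hs1 : ∑ i ∈ Finset.range Q.natAbs, bF w' (i : ℤ)
            = ∑ i ∈ Finset.range Q.natAbs, aF w (i : ℤ) :=
          Finset.sum_congr rfl (fun i _ => hbw' (i : ℤ))
        have hs2 : ∑ j ∈ Finset.range P.toNat, aF w' (j : ℤ)
            = ∑ j ∈ Finset.range P.toNat, bF w (j : ℤ) :=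
          Finset.sum_congr rfl (fun j _ => haw' (j : ℤ))
        rw [hs1, hs2] at h2'
        have e4 : (-Q : ℤ) = (Q.natAbs : ℤ) := by omega
        rw [e4] at h2'
        linarith [h2']
      · have h2' := masterRel n hn w' hw' Q P hpos (by omega) hper'
        have e1 : Q.toNat = Q.natAbs := by omega
        have e2 : P.natAbs = P.toNat := by omega
        rw [e1, e2, e3] at h2'
        have hs1 : ∑ i ∈ Finset.range Q.natAbs, bF w' (i : ℤ)
            = ∑ i ∈ Finset.range Q.natAbs, aF w (i : ℤ) :=
          Finset.sum_congr rfl (fun i _ => hbw' (i : ℤ))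
        have hs2 : ∑ j ∈ Finset.range P.toNat, aF w' (j : ℤ)
            = ∑ j ∈ Finset.range P.toNat, bF w (j : ℤ) :=
          Finset.sum_congr rfl (fun j _ => haw' (j : ℤ))
        rw [hs1, hs2] at h2'
        have e4 : (Q : ℤ) = (Q.natAbs : ℤ) := by omega
        rw [e4, show ((Q.natAbs : ℤ)).natAbs = Q.natAbs from Int.natAbs_natCast _] at h2'
        linarith [h2']
    set B := ∑ i ∈ Finset.range P.toNat, bF w i with hB
    set A := ∑ j ∈ Finset.range Q.natAbs, aF w j with hA
    have hqz : 1 ≤ (Q.natAbs : ℤ) := by omega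
    have h3 : (Q.natAbs : ℤ) * B - P * A = 0 := by
      have h5 : n * ((Q.natAbs : ℤ) * B - P * A) = 0 := by linear_combination h1 - h2
      rcases mul_eq_zero.mp h5 with h | h
      · omega
      · exact h
    have h4 : (Q.natAbs : ℤ) * (B ^ 2 - (n + 2) * P * B + n * P ^ 2) = 0 := by
      linear_combination (-P) * h1 - (P - B) * h3
    have hquad : B ^ 2 - (n + 2) * P * B + n * P ^ 2 = 0 := by
      rcases mul_eq_zero.mp h4 with h | h
      · exfalso; omega
      · exact h
    exact quad_no_sol n hn B P (by omega) hquad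

/-- The metallic mean Wang shift Ω_n is aperiodic: it is nonempty and
no valid configuration is fixed by a nonzero shift. -/
theorem statement18 (n : ℤ) (hn : 1 ≤ n) :
    (OmegaOf (Tset n)).Nonempty ∧
    ∀ w ∈ OmegaOf (Tset n), ∀ k : ℤ × ℤ, k ≠ (0, 0) → shift k w ≠ w := by
  constructor
  · exact ⟨_, omega_nonempty n hn⟩
  · rintro w hw ⟨P, Q⟩ hk hshift
    have hper : ∀ m : ℤ × ℤ, w (m + (P, Q)) = w m := fun m => congrFun hshift m
    rcases lt_trichotomy P 0 with hP | hP | hP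
    · have hper2 : ∀ m : ℤ × ℤ, w (m + (-P, -Q)) = w m := by
        intro m
        have := perNeg w (P, Q) hper m
        rwa [show (-((P : ℤ), (Q : ℤ)) : ℤ × ℤ) = (-P, -Q) from rfl] at this
      exact noPeriod n hn w hw (-P) (-Q) (by omega) hper2
    · subst hP
      have hQ : Q ≠ 0 := by
        intro h
        exact hk (by rw [h])
      set w' : Config := fun m => reflect (w (m.2, m.1)) with hw'def
      have hw' : IsValid (Tset n) w' := reflect_valid n w hw
      have hper' : ∀ m : ℤ × ℤ, w' (m + (Q, 0)) = w' m := by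
        intro m
        show reflect (w ((m + (Q, 0)).2, (m + (Q, 0)).1)) = reflect (w (m.2, m.1))
        have e : (((m + ((Q : ℤ), (0 : ℤ))).2 : ℤ), (m + ((Q : ℤ), (0 : ℤ))).1)
            = ((m.2 : ℤ), m.1) + (0, Q) := by cases m; simp [prodmk_add]
        rw [e, hper (m.2, m.1)]
      rcases lt_or_gt_of_ne hQ with hneg | hpos
      · have hper2 : ∀ m : ℤ × ℤ, w' (m + (-Q, 0)) = w' m := by
          intro m
          have := perNeg w' (Q, 0) hper' m
          rwa [show (-((Q : ℤ), (0 : ℤ)) : ℤ × ℤ) = (-Q, -0) from rfl, neg_zero] at this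
        exact noPeriod n hn w' hw' (-Q) 0 (by omega) hper2
      · exact noPeriod n hn w' hw' Q 0 hpos hper'
    · exact noPeriod n hn w hw P Q hP hper

end MetallicMean
end
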